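/- arXiv:2103.04358 — 4 statements merged into one kernel-verified Lean document; each statement's English description precedes it below -/
import Mathlib

section
/- Let s > 0 and a ∈ ℝ. Then the family (E'_{I,J,K}(a,s))_{(I,J,K) ∈ ℤ³} is absolutely summable, the limit by expanding rectangles lim_{(I,J,K)→∞} S_{Π_{I,J,K}}(a,s) exists (i.e. there is L ∈ ℝ such that for every ε > 0 there is N₀ with |S_{Π_{I,J,K}}(a,s) - L| < ε whenever min{I,J,K} ≥ N₀), and this limit equals ∑_{(I,J,K) ∈ ℤ³} E'_{I,J,K}(a,s). -/
open scoped BigOperators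

/-- `S_{Π_{I,J,K}}(a,s)`: the alternating lattice sum over the nonzero integer points of the
rectangle `Π_{I,J,K} = [-I,I] × [-J,J] × [-K,K]`. -/
noncomputable def Spi (a s : ℝ) (I J K : ℕ) : ℝ :=
  ∑ p ∈ ((Finset.Icc (-(I : ℤ)) (I : ℤ)) ×ˢ (Finset.Icc (-(J : ℤ)) (J : ℤ)) ×ˢ
      (Finset.Icc (-(K : ℤ)) (K : ℤ))).filter (fun p : ℤ × ℤ × ℤ => p ≠ 0),
    (-1 : ℝ) ^ (p.1 + p.2.1 + p.2.2) *
      (a ^ 2 + (p.1 : ℝ) ^ 2 + (p.2.1 : ℝ) ^ 2 + (p.2.2 : ℝ) ^ 2) ^ (-s)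

/-- `E'_{I,J,K}(a,s)`: the alternating block sum over the 8 corners of the cube
`Q_{2I,2J,2K}`, with the term at the origin omitted. -/
noncomputable def Eblock (a s : ℝ) (I J K : ℤ) : ℝ :=
  ∑ i ∈ Finset.Icc (2 * I) (2 * I + 1), ∑ j ∈ Finset.Icc (2 * J) (2 * J + 1),
    ∑ k ∈ Finset.Icc (2 * K) (2 * K + 1),
      if (i, j, k) = ((0 : ℤ), (0 : ℤ), (0 : ℤ)) then 0
      else (-1 : ℝ) ^ (i + j + k) *
        (a ^ 2 + (i : ℝ) ^ 2 + (j : ℝ) ^ 2 + (k : ℝ) ^ 2) ^ (-s)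


open Finset

namespace Mad

noncomputable def F0 (q s x y z : ℝ) : ℝ := (q + x^2 + y^2 + z^2) ^ (-s)
noncomputable def F1 (q s x y z : ℝ) : ℝ := -2*s*x*(q + x^2 + y^2 + z^2) ^ (-(s+1))
noncomputable def F2 (q s x y z : ℝ) : ℝ := 4*s*(s+1)*x*y*(q + x^2 + y^2 + z^2) ^ (-(s+2))
noncomputable def F3 (q s x y z : ℝ) : ℝ :=
  -8*s*(s+1)*(s+2)*x*y*z*(q + x^2 + y^2 + z^2) ^ (-(s+3))

lemma diff_bound {t t' : ℝ → ℝ} {c B : ℝ}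
    (hd : ∀ x ∈ Set.Icc c (c+1), HasDerivAt t (t' x) x)
    (hb : ∀ x ∈ Set.Icc c (c+1), |t' x| ≤ B) :
    |t c - t (c+1)| ≤ B := by
  have hlt : c < c + 1 := by linarith
  have hcont : ContinuousOn t (Set.Icc c (c+1)) :=
    fun x hx => ((hd x hx).continuousAt).continuousWithinAt
  obtain ⟨ξ, hξ, h⟩ := exists_hasDerivAt_eq_slope t t' hlt hcont
    (fun x hx => hd x (Set.mem_Icc_of_Ioo hx))
  have h3 : c + 1 - c = 1 := by ring
  rw [h3, div_one] at h
  have h4 : |t c - t (c+1)| = |t' ξ| := by rw [abs_sub_comm, h]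
  rw [h4]; exact hb ξ (Set.mem_Icc_of_Ioo hξ)

lemma hasDerivAt_rpow_sq (Q r : ℝ) (x : ℝ) (h : 0 < Q + x^2) :
    HasDerivAt (fun x : ℝ => (Q + x^2) ^ (-r)) (-2*r*x*(Q + x^2)^(-(r+1))) x := by
  have h1 : HasDerivAt (fun x : ℝ => Q + x^2) (2*x) x := by
    simpa using (hasDerivAt_pow 2 x).const_add Q
  have h2 := (Real.hasDerivAt_rpow_const (x := Q + x^2) (p := -r) (Or.inl h.ne')).comp x h1
  have h3 : (fun x : ℝ => (Q + x^2) ^ (-r)) = (fun y : ℝ => y ^ (-r)) ∘ (fun x : ℝ => Q + x^2) :=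
    rfl
  rw [h3, show -2*r*x*(Q + x^2)^(-(r+1)) = -r * (Q + x^2) ^ (-r - 1) * (2*x) from by
    rw [show -(r+1) = -r - 1 by ring]; ring]
  exact h2

lemma d0x (q s y z x : ℝ) (h : 0 < q + x^2 + y^2 + z^2) :
    HasDerivAt (fun x => F0 q s x y z) (F1 q s x y z) x := by
  have hb : 0 < (q + y^2 + z^2) + x^2 := by nlinarith [h]
  have h := hasDerivAt_rpow_sq (q + y^2 + z^2) s x hb
  have hf : ∀ u : ℝ, (q + y^2 + z^2) + u^2 = q + u^2 + y^2 + z^2 := fun u => by ring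
  simp only [hf] at h
  exact h

lemma d1y (q s x z y : ℝ) (h : 0 < q + x^2 + y^2 + z^2) :
    HasDerivAt (fun y => F1 q s x y z) (F2 q s x y z) y := by
  have hb : 0 < (q + x^2 + z^2) + y^2 := by nlinarith [h]
  have h := (hasDerivAt_rpow_sq (q + x^2 + z^2) (s+1) y hb).const_mul (-2*s*x)
  have hf : ∀ u : ℝ, (q + x^2 + z^2) + u^2 = q + x^2 + u^2 + z^2 := fun u => by ring
  simp only [hf] at h
  unfold F1 F2
  rw [show 4*s*(s+1)*x*y*(q + x^2 + y^2 + z^2) ^ (-(s+2))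
      = -2*s*x * (-2*(s+1)*y*(q + x^2 + y^2 + z^2) ^ (-(s+1+1))) from by
    rw [show -(s+1+1) = -(s+2) by ring]; ring]
  exact h

lemma d2z (q s x y z : ℝ) (h : 0 < q + x^2 + y^2 + z^2) :
    HasDerivAt (fun z => F2 q s x y z) (F3 q s x y z) z := by
  have hb : 0 < (q + x^2 + y^2) + z^2 := by nlinarith [h]
  have h := (hasDerivAt_rpow_sq (q + x^2 + y^2) (s+2) z hb).const_mul (4*s*(s+1)*x*y)
  have hf : ∀ u : ℝ, (q + x^2 + y^2) + u^2 = q + x^2 + y^2 + u^2 := fun u => by ring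
  unfold F2 F3
  rw [show -8*s*(s+1)*(s+2)*x*y*z*(q + x^2 + y^2 + z^2) ^ (-(s+3))
      = 4*s*(s+1)*x*y * (-2*(s+2)*z*(q + x^2 + y^2 + z^2) ^ (-(s+2+1))) from by
    rw [show -(s+2+1) = -(s+3) by ring]; ring]
  exact h

lemma F3_abs (q s x y z : ℝ) (hq : 0 ≤ q) (hs : 0 < s) :
    |F3 q s x y z| = 8*s*(s+1)*(s+2)*|x| * |y| * |z| * (q + x^2+y^2+z^2)^(-(s+3)) := by
  unfold F3
  have h0 : (0:ℝ) ≤ (q + x^2+y^2+z^2)^(-(s+3)) := Real.rpow_nonneg (by positivity) _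
  rw [abs_mul, abs_mul, abs_mul, abs_mul, abs_mul, abs_mul]
  rw [abs_of_nonneg h0]
  have : |(-8:ℝ)*s| = 8*s := by rw [abs_of_nonpos (by nlinarith)]; ring
  rw [this, abs_of_nonneg (by linarith : (0:ℝ) ≤ s+1), abs_of_nonneg (by linarith : (0:ℝ) ≤ s+2)]

/-- Bound on the triple mixed difference of `F0` over a unit cube via three MVTs. -/
lemma triple_diff_bound (q s : ℝ) (hs : 0 < s) (hq : 0 ≤ q) (c₁ c₂ c₃ B : ℝ)
    (hpos : ∀ x ∈ Set.Icc c₁ (c₁+1), ∀ y ∈ Set.Icc c₂ (c₂+1), ∀ z ∈ Set.Icc c₃ (c₃+1),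
      0 < q + x^2 + y^2 + z^2)
    (hB : ∀ x ∈ Set.Icc c₁ (c₁+1), ∀ y ∈ Set.Icc c₂ (c₂+1), ∀ z ∈ Set.Icc c₃ (c₃+1),
      8*s*(s+1)*(s+2)*|x| * |y| * |z| * (q + x^2+y^2+z^2)^(-(s+3)) ≤ B) :
    |((F0 q s c₁ c₂ c₃ - F0 q s (c₁+1) c₂ c₃) - (F0 q s c₁ (c₂+1) c₃ - F0 q s (c₁+1) (c₂+1) c₃))
      - ((F0 q s c₁ c₂ (c₃+1) - F0 q s (c₁+1) c₂ (c₃+1))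
        - (F0 q s c₁ (c₂+1) (c₃+1) - F0 q s (c₁+1) (c₂+1) (c₃+1)))| ≤ B := by
  have hm₂ : c₂ ∈ Set.Icc c₂ (c₂+1) := by constructor <;> linarith
  have hm₂' : c₂+1 ∈ Set.Icc c₂ (c₂+1) := by constructor <;> linarith
  have hm₃ : c₃ ∈ Set.Icc c₃ (c₃+1) := by constructor <;> linarith
  have hm₃' : c₃+1 ∈ Set.Icc c₃ (c₃+1) := by constructor <;> linarith
  set t : ℝ → ℝ := fun x => (F0 q s x c₂ c₃ - F0 q s x (c₂+1) c₃)
      - (F0 q s x c₂ (c₃+1) - F0 q s x (c₂+1) (c₃+1)) with ht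
  have key : |t c₁ - t (c₁+1)| ≤ B := by
    apply diff_bound (t' := fun x => (F1 q s x c₂ c₃ - F1 q s x (c₂+1) c₃)
      - (F1 q s x c₂ (c₃+1) - F1 q s x (c₂+1) (c₃+1)))
    · intro x hx
      exact (((d0x q s c₂ c₃ x (hpos x hx c₂ hm₂ c₃ hm₃)).sub
        (d0x q s (c₂+1) c₃ x (hpos x hx _ hm₂' c₃ hm₃))).sub
        ((d0x q s c₂ (c₃+1) x (hpos x hx c₂ hm₂ _ hm₃')).sub
        (d0x q s (c₂+1) (c₃+1) x (hpos x hx _ hm₂' _ hm₃'))))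
    · intro x hx
      set t₂ : ℝ → ℝ := fun y => F1 q s x y c₃ - F1 q s x y (c₃+1) with ht₂
      have hre : (F1 q s x c₂ c₃ - F1 q s x (c₂+1) c₃)
          - (F1 q s x c₂ (c₃+1) - F1 q s x (c₂+1) (c₃+1)) = t₂ c₂ - t₂ (c₂+1) := by
        simp only [ht₂]; ring
      rw [hre]
      apply diff_bound (t' := fun y => F2 q s x y c₃ - F2 q s x y (c₃+1))
      · intro y hy
        exact (d1y q s x c₃ y (hpos x hx y hy c₃ hm₃)).sub
          (d1y q s x (c₃+1) y (hpos x hx y hy _ hm₃'))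
      · intro y hy
        apply diff_bound (t' := fun z => F3 q s x y z)
        · intro z hz; exact d2z q s x y z (hpos x hx y hy z hz)
        · intro z hz
          rw [F3_abs q s x y z hq hs]
          exact hB x hx y hy z hz
  convert key using 2
  simp only [ht]; ring


noncomputable def G0 (w s y z : ℝ) : ℝ := (w + y^2 + z^2) ^ (-s)
noncomputable def G1 (w s y z : ℝ) : ℝ := -2*s*y*(w + y^2 + z^2) ^ (-(s+1))
noncomputable def G2 (w s y z : ℝ) : ℝ := 4*s*(s+1)*y*z*(w + y^2 + z^2) ^ (-(s+2))


lemma dg0y (w s z y : ℝ) (h : 0 < w + y^2 + z^2) :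
    HasDerivAt (fun y => G0 w s y z) (G1 w s y z) y := by
  have hb : 0 < (w + z^2) + y^2 := by nlinarith [h]
  have hd := hasDerivAt_rpow_sq (w + z^2) s y hb
  have hf : ∀ u : ℝ, (w + z^2) + u^2 = w + u^2 + z^2 := fun u => by ring
  simp only [hf] at hd
  exact hd

lemma dg1z (w s y z : ℝ) (h : 0 < w + y^2 + z^2) :
    HasDerivAt (fun z => G1 w s y z) (G2 w s y z) z := by
  have hb : 0 < (w + y^2) + z^2 := by nlinarith [h]
  have hd := (hasDerivAt_rpow_sq (w + y^2) (s+1) z hb).const_mul (-2*s*y)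
  have hf : ∀ u : ℝ, (w + y^2) + u^2 = w + y^2 + u^2 := fun u => by ring
  unfold G1 G2
  rw [show 4*s*(s+1)*y*z*(w + y^2 + z^2) ^ (-(s+2))
      = -2*s*y * (-2*(s+1)*z*(w + y^2 + z^2) ^ (-(s+1+1))) from by
    rw [show -(s+1+1) = -(s+2) by ring]; ring]
  exact hd

lemma G2_abs (w s y z : ℝ) (hw : 0 ≤ w) (hs : 0 < s) :
    |G2 w s y z| = 4*s*(s+1)*|y| * |z| * (w + y^2 + z^2)^(-(s+2)) := by
  unfold G2
  have h0 : (0:ℝ) ≤ (w + y^2 + z^2)^(-(s+2)) := Real.rpow_nonneg (by positivity) _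
  rw [abs_mul, abs_mul, abs_mul, abs_mul, abs_of_nonneg h0,
    abs_of_nonneg (by nlinarith : (0:ℝ) ≤ 4*s), abs_of_nonneg (by linarith : (0:ℝ) ≤ s+1)]

lemma double_diff_bound (w s : ℝ) (hs : 0 < s) (hw : 0 ≤ w) (c₂ c₃ B : ℝ)
    (hpos : ∀ y ∈ Set.Icc c₂ (c₂+1), ∀ z ∈ Set.Icc c₃ (c₃+1), 0 < w + y^2 + z^2)
    (hB : ∀ y ∈ Set.Icc c₂ (c₂+1), ∀ z ∈ Set.Icc c₃ (c₃+1),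
      4*s*(s+1)*|y| * |z| * (w + y^2+z^2)^(-(s+2)) ≤ B) :
    |(G0 w s c₂ c₃ - G0 w s (c₂+1) c₃) - (G0 w s c₂ (c₃+1) - G0 w s (c₂+1) (c₃+1))| ≤ B := by
  have hm₃ : c₃ ∈ Set.Icc c₃ (c₃+1) := by constructor <;> linarith
  have hm₃' : c₃+1 ∈ Set.Icc c₃ (c₃+1) := by constructor <;> linarith
  set t : ℝ → ℝ := fun y => G0 w s y c₃ - G0 w s y (c₃+1) with ht
  have key : |t c₂ - t (c₂+1)| ≤ B := by
    apply diff_bound (t' := fun y => G1 w s y c₃ - G1 w s y (c₃+1))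
    · intro y hy
      exact (dg0y w s c₃ y (hpos y hy c₃ hm₃)).sub (dg0y w s (c₃+1) y (hpos y hy _ hm₃'))
    · intro y hy
      apply diff_bound (t' := fun z => G2 w s y z)
      · intro z hz; exact dg1z w s y z (hpos y hy z hz)
      · intro z hz
        rw [G2_abs w s y z hw hs]
        exact hB y hy z hz
  convert key using 2
  simp only [ht]; ring


lemma sum_two (f : ℤ → ℝ) (c : ℤ) : ∑ i ∈ Icc c (c+1), f i = f c + f (c+1) := by
  have e : Icc c (c+1) = {c, c+1} := by ext i; simp only [mem_Icc, mem_insert, mem_singleton]; omega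
  rw [e, sum_pair (by omega)]

lemma sum_pairs (h : ℤ → ℝ) (N : ℕ) :
    ∑ i ∈ Icc (-(2*(N:ℤ))) (2*(N:ℤ)-1), h i
      = ∑ n ∈ Icc (-(N:ℤ)) ((N:ℤ)-1), (h (2*n) + h (2*n+1)) := by
  induction N with
  | zero => simp
  | succ N ih =>
    have e1 : Icc (-(2*((N+1:ℕ):ℤ))) (2*((N+1:ℕ):ℤ)-1)
        = insert (-(2*(N:ℤ)+2)) (insert (-(2*(N:ℤ)+1)) (insert (2*(N:ℤ))
            (insert (2*(N:ℤ)+1) (Icc (-(2*(N:ℤ))) (2*(N:ℤ)-1))))) := by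
      ext i; simp only [mem_insert, mem_Icc]; push_cast; omega
    have e2 : Icc (-((N+1:ℕ):ℤ)) (((N+1:ℕ):ℤ)-1)
        = insert (-(N:ℤ)-1) (insert (N:ℤ) (Icc (-(N:ℤ)) ((N:ℤ)-1))) := by
      ext i; simp only [mem_insert, mem_Icc]; push_cast; omega
    rw [e1, e2, sum_insert (by simp only [mem_insert, mem_Icc]; omega),
        sum_insert (by simp only [mem_insert, mem_Icc]; omega),
        sum_insert (by simp only [mem_insert, mem_Icc]; omega),
        sum_insert (by simp only [mem_Icc]; omega),
        sum_insert (by simp only [mem_insert, mem_Icc]; omega),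
        sum_insert (by simp only [mem_Icc]; omega), ih]
    rw [show 2*(-(N:ℤ)-1) = -(2*(N:ℤ)+2) by ring]
    rw [show -(2*(N:ℤ)+2)+1 = -(2*(N:ℤ)+1) by ring]
    ring

lemma sum_sym (g : ℤ → ℝ) (hg : ∀ k : ℤ, g (-k) = g k) (K : ℕ) :
    ∑ k ∈ Icc (-(K:ℤ)) (K:ℤ), g k = g 0 + 2 * ∑ k ∈ Icc 1 K, g (k:ℤ) := by
  induction K with
  | zero => simp
  | succ K ih =>
    have e1 : Icc (-((K+1:ℕ):ℤ)) ((K+1:ℕ):ℤ)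
        = insert (-((K:ℤ)+1)) (insert ((K:ℤ)+1) (Icc (-(K:ℤ)) (K:ℤ))) := by
      ext i; simp only [mem_insert, mem_Icc]; push_cast; omega
    rw [e1, sum_insert (by simp only [mem_insert, mem_Icc]; omega),
        sum_insert (by simp only [mem_Icc]; omega), ih,
        Finset.sum_Icc_succ_top (by omega : 1 ≤ K + 1), hg ((K:ℤ)+1)]
    push_cast
    ring

lemma alt_tail (f : ℕ → ℝ) (hf0 : ∀ k, 0 ≤ f k) (hmono : ∀ k l, k ≤ l → f l ≤ f k) (K : ℕ) :
    |∑ k ∈ Icc 1 K, (-1:ℝ)^k * f k| ≤ f 1 := by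
  set T : ℕ → ℝ := fun K => ∑ k ∈ Icc 1 K, (-1:ℝ)^k * f k with hT
  have hrec : ∀ K : ℕ, T (K+1) = T K + (-1:ℝ)^(K+1) * f (K+1) := by
    intro K; simp only [hT]; rw [Finset.sum_Icc_succ_top (by omega : 1 ≤ K + 1)]
  have P : ∀ K : ℕ, (-f 1 ≤ T K ∧ T K ≤ 0) ∧ (Even K → 1 ≤ K → -f 1 + f K ≤ T K)
      ∧ (¬ Even K → T K ≤ -f K) := by
    have main : ∀ K : ℕ, ((-f 1 ≤ T K ∧ T K ≤ 0) ∧ (Even K → 1 ≤ K → -f 1 + f K ≤ T K)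
          ∧ (¬ Even K → T K ≤ -f K))
        ∧ ((-f 1 ≤ T (K+1) ∧ T (K+1) ≤ 0) ∧ (Even (K+1) → 1 ≤ K+1 → -f 1 + f (K+1) ≤ T (K+1))
          ∧ (¬ Even (K+1) → T (K+1) ≤ -f (K+1))) := by
      intro K
      induction K with
      | zero =>
        have h0 : T 0 = 0 := by simp [hT]
        have h1 : T 1 = -f 1 := by
          simp only [hT]; rw [show Icc 1 1 = {1} by rfl, sum_singleton]; simp
        constructor
        · refine ⟨⟨by rw [h0]; linarith [hf0 1], by rw [h0]⟩, ?_, ?_⟩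
          · intro _ h; omega
          · intro h; exact absurd (by decide) h
        · refine ⟨⟨by rw [h1], by rw [h1]; linarith [hf0 1]⟩, ?_, ?_⟩
          · intro h; exact absurd h (by decide)
          · intro _; rw [h1]
      | succ K ih =>
        refine ⟨ih.2, ?_⟩
        obtain ⟨⟨hlo, hhi⟩, hev, hod⟩ := ih.1
        have hrec2 : T (K+2) = T K + (-1:ℝ)^(K+1) * f (K+1) + (-1:ℝ)^(K+2) * f (K+2) := by
          rw [hrec (K+1), hrec K]
        have hm12 : f (K+2) ≤ f (K+1) := hmono _ _ (by omega)
        have hm01 : f (K+1) ≤ f K := hmono _ _ (by omega)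
        by_cases hE : Even K
        · have hE2 : Even (K+2) := by rcases hE with ⟨m, hm⟩; exact ⟨m+1, by omega⟩
          have s1 : (-1:ℝ)^(K+1) = -1 := Odd.neg_one_pow hE.add_one
          have s2 : (-1:ℝ)^(K+2) = 1 := Even.neg_one_pow hE2
          have hT2 : T (K+2) = T K - f (K+1) + f (K+2) := by rw [hrec2, s1, s2]; ring
          have href : -f 1 + f (K+2) ≤ T (K+2) := by
            rcases Nat.eq_zero_or_pos K with hK0 | hpos
            · subst hK0
              have hT0 : T 0 = 0 := by simp [hT]
              rw [hT2, hT0]; linarith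
            · have := hev hE hpos
              rw [hT2]; linarith
          refine ⟨⟨by linarith [hf0 (K+2)], by rw [hT2]; linarith⟩,
            fun _ _ => href, fun h => absurd hE2 h⟩
        · have hO : Odd K := Nat.not_even_iff_odd.1 hE
          have hO2 : Odd (K+2) := by rcases hO with ⟨m, hm⟩; exact ⟨m+1, by omega⟩
          have s1 : (-1:ℝ)^(K+1) = 1 := Even.neg_one_pow (Nat.even_add_one.2 hE)
          have s2 : (-1:ℝ)^(K+2) = -1 := Odd.neg_one_pow hO2
          have hT2 : T (K+2) = T K + f (K+1) - f (K+2) := by rw [hrec2, s1, s2]; ring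
          have hodK := hod hE
          have href : T (K+2) ≤ -f (K+2) := by rw [hT2]; linarith
          refine ⟨⟨by rw [hT2]; linarith, by linarith [hf0 (K+2)]⟩, ?_, fun _ => href⟩
          intro h
          exfalso
          have : Even K := by rcases h with ⟨m, hm⟩; exact ⟨m-1, by omega⟩
          exact hE this
    intro K; exact (main K).1
  obtain ⟨⟨hlo, hhi⟩, -, -⟩ := P K
  rw [abs_le]; exact ⟨by linarith, by linarith [hf0 1]⟩


lemma rpow_mono_neg {x y t : ℝ} (hx : 0 < x) (hxy : x ≤ y) (ht : 0 ≤ t) :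
    y ^ (-t) ≤ x ^ (-t) :=
  Real.rpow_le_rpow_of_nonpos hx hxy (neg_nonpos.2 ht)

lemma le_rpow_half {A B : ℝ} (hA : 0 ≤ A) (h : A^2 ≤ B) : A ≤ B ^ ((1:ℝ)/2) := by
  have h1 : (A^(2:ℕ)) ^ ((1:ℝ)/2) = A := by
    rw [← Real.rpow_natCast A 2, ← Real.rpow_mul hA]
    norm_num
  calc A = (A^(2:ℕ)) ^ ((1:ℝ)/2) := h1.symm
    _ ≤ B ^ ((1:ℝ)/2) := Real.rpow_le_rpow (by positivity) h (by norm_num)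

lemma npz (m δ : ℤ) : (-1:ℝ)^(2*m+δ) = (-1:ℝ)^δ := by
  rw [zpow_add₀ (by norm_num : (-1:ℝ) ≠ 0), zpow_mul]
  norm_num


lemma alt_sym_bound (v r : ℝ) (hv : 1 ≤ v) (hr : 0 < r) (K : ℕ) :
    |∑ k ∈ Icc (-(K:ℤ)) (K:ℤ), (-1:ℝ)^k * (v + (k:ℝ)^2)^(-r)| ≤ 3 * v^(-r) := by
  have hv0 : (0:ℝ) < v := by linarith
  set g : ℤ → ℝ := fun k => (-1:ℝ)^k * (v + (k:ℝ)^2)^(-r) with hgdef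
  have hgsym : ∀ k : ℤ, g (-k) = g k := by
    intro k
    have h1 : (-1:ℝ)^(-k) = (-1:ℝ)^k := by
      rw [zpow_neg]
      rcases Int.even_or_odd k with he | ho
      · rw [he.neg_one_zpow]; norm_num
      · rw [ho.neg_one_zpow]; norm_num
    have h2 : ((-k:ℤ):ℝ)^2 = (k:ℝ)^2 := by push_cast; ring
    simp only [hgdef, h1, h2]
  rw [show (∑ k ∈ Icc (-(K:ℤ)) (K:ℤ), (-1:ℝ)^k * (v + (k:ℝ)^2)^(-r)) = ∑ k ∈ Icc (-(K:ℤ)) (K:ℤ), g k from rfl,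
    sum_sym g hgsym K]
  set f : ℕ → ℝ := fun k => (v + (k:ℝ)^2)^(-r) with hfdef
  have hf0 : ∀ k, 0 ≤ f k := fun k => Real.rpow_nonneg (by positivity) _
  have hmono : ∀ k l : ℕ, k ≤ l → f l ≤ f k := by
    intro k l hkl
    apply rpow_mono_neg (by positivity)
    · have hc : (k:ℝ) ≤ (l:ℝ) := Nat.cast_le.2 hkl
      nlinarith [(Nat.cast_nonneg k : (0:ℝ) ≤ k), (Nat.cast_nonneg l : (0:ℝ) ≤ l)]
    · exact hr.le
  have hsum_eq : ∑ k ∈ Icc 1 K, g (k:ℤ) = ∑ k ∈ Icc 1 K, (-1:ℝ)^k * f k := by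
    apply sum_congr rfl
    intro k _
    simp only [hgdef, hfdef, zpow_natCast, Int.cast_natCast]
  have hT := alt_tail f hf0 hmono K
  have hg0 : g 0 = v ^ (-r) := by simp [hgdef]
  have hf1 : f 1 ≤ v ^ (-r) := by
    have : f 1 = (v + 1)^(-r) := by norm_num [hfdef]
    rw [this]; exact rpow_mono_neg hv0 (by linarith) hr.le
  rw [hsum_eq] at *
  rw [hg0]
  calc |v ^ (-r) + 2 * ∑ k ∈ Icc 1 K, (-1:ℝ)^k * f k|
      ≤ |v ^ (-r)| + 2 * |∑ k ∈ Icc 1 K, (-1:ℝ)^k * f k| := by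
        calc |v ^ (-r) + 2 * ∑ k ∈ Icc 1 K, (-1:ℝ)^k * f k|
            ≤ |v ^ (-r)| + |2 * ∑ k ∈ Icc 1 K, (-1:ℝ)^k * f k| := abs_add_le _ _
          _ = |v ^ (-r)| + 2 * |∑ k ∈ Icc 1 K, (-1:ℝ)^k * f k| := by
              rw [abs_mul]; norm_num
    _ ≤ v ^ (-r) + 2 * f 1 := by
        rw [abs_of_nonneg (Real.rpow_nonneg hv0.le _)]
        linarith [hT]
    _ ≤ 3 * v ^ (-r) := by linarith

lemma summable_aux_nat (t : ℝ) (ht : 1/2 < t) :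
    Summable (fun n : ℕ => ((1:ℝ) + (n:ℝ)^2) ^ (-t)) := by
  rw [← summable_nat_add_iff 1]
  have hbase : Summable (fun n : ℕ => ((n:ℝ)+1) ^ (-(2*t))) := by
    have h1 : Summable (fun n : ℕ => ((n:ℝ)) ^ (-(2*t))) :=
      Real.summable_nat_rpow.2 (by linarith)
    have := (summable_nat_add_iff (f := fun n : ℕ => ((n:ℝ)) ^ (-(2*t))) 1).2 h1
    apply this.congr
    intro n; push_cast; ring_nf
  apply Summable.of_nonneg_of_le (fun n => Real.rpow_nonneg (by positivity) _) _ hbase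
  intro n
  have h2 : ((n:ℝ)+1)^(2:ℕ) ≤ (1:ℝ) + ((n+1:ℕ):ℝ)^2 := by
    push_cast; nlinarith [(Nat.cast_nonneg n : (0:ℝ) ≤ n)]
  have h3 : ((1:ℝ) + ((n+1:ℕ):ℝ)^2) ^ (-t) ≤ (((n:ℝ)+1)^(2:ℕ)) ^ (-t) :=
    rpow_mono_neg (by positivity) h2 (by linarith)
  calc ((1:ℝ) + ((n+1:ℕ):ℝ)^2) ^ (-t) ≤ (((n:ℝ)+1)^(2:ℕ)) ^ (-t) := h3
    _ = ((n:ℝ)+1) ^ (-(2*t)) := by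
        rw [← Real.rpow_natCast ((n:ℝ)+1) 2, ← Real.rpow_mul (by positivity)]
        congr 1
        push_cast
        ring

lemma summable_one_add_sq (t : ℝ) (ht : 1/2 < t) :
    Summable (fun m : ℤ => ((1:ℝ) + (m:ℝ)^2) ^ (-t)) := by
  rw [summable_int_iff_summable_nat_and_neg]
  have aux := summable_aux_nat t ht
  constructor
  · apply aux.congr; intro n; norm_num
  · apply aux.congr; intro n
    rw [show ((( -(n:ℤ)):ℤ):ℝ)^2 = ((n:ℝ))^2 by push_cast; ring]


-- (5a) coordinate bounds on a block interval
lemma z0 (t : ℤ) : (-1:ℝ)^(2*t) = 1 := by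
  rw [zpow_mul]; norm_num

lemma z1 (t : ℤ) : (-1:ℝ)^(2*t+1) = -1 := by
  rw [zpow_add₀ (by norm_num : (-1:ℝ) ≠ 0), z0]; norm_num

lemma coord_abs {m : ℤ} {x : ℝ} (hx : x ∈ Set.Icc (2*(m:ℝ)) (2*(m:ℝ)+1)) :
    |x| ≤ 2*|(m:ℝ)|+1 ∧ (m:ℝ)^2 ≤ x^2 := by
  obtain ⟨h1, h2⟩ := hx
  rcases le_or_gt 0 (m:ℝ) with hm | hm
  · have hx0 : 0 ≤ x := le_trans (by linarith) h1
    rw [abs_of_nonneg hx0, abs_of_nonneg hm]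
    exact ⟨by linarith, by nlinarith⟩
  · have hmz : m < 0 := by exact_mod_cast hm
    have hm1 : (m:ℝ) ≤ -1 := by
      have h' : m ≤ -1 := by omega
      calc (m:ℝ) ≤ ((-1:ℤ):ℝ) := by exact_mod_cast h'
        _ = -1 := by norm_num
    have hx1 : x ≤ -1 := by linarith
    rw [abs_of_nonpos (by linarith), abs_of_neg hm]
    constructor
    · linarith
    · nlinarith [mul_nonneg (by linarith : (0:ℝ) ≤ 2*(m:ℝ)+1 - x) (by linarith : (0:ℝ) ≤ -(x + 2*(m:ℝ)+1)),
        mul_nonneg (by linarith : (0:ℝ) ≤ -(3*(m:ℝ)+1)) (by linarith : (0:ℝ) ≤ -((m:ℝ)+1))]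

lemma two_abs_le {m : ℤ} : 2*|(m:ℝ)|+1 ≤ 3*((1:ℝ)+(m:ℝ)^2)^((1:ℝ)/2) := by
  have h := le_rpow_half (A := (2*|(m:ℝ)|+1)/3) (B := (1:ℝ)+(m:ℝ)^2) (by positivity) (by
    rw [div_pow, show ((3:ℝ))^2 = 9 by norm_num, div_le_iff₀ (by norm_num : (0:ℝ) < 9)]
    nlinarith [sq_abs (m:ℝ), abs_nonneg (m:ℝ), sq_nonneg (|(m:ℝ)| - 2)])
  linarith [h, (by linarith [h] : (2*|(m:ℝ)|+1)/3 ≤ ((1:ℝ)+(m:ℝ)^2)^((1:ℝ)/2))]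

-- key exponent-splitting inequality, 3D version
lemma inv_pow_bound3 (s : ℝ) (hs : 0 < s) (u : ℝ) (m n p : ℤ)
    (hone : (1:ℝ) ≤ (m:ℝ)^2 + (n:ℝ)^2 + (p:ℝ)^2)
    (hu : (m:ℝ)^2 + (n:ℝ)^2 + (p:ℝ)^2 ≤ u) :
    u^(-(s+3)) ≤ 2^(s+3) * (((1:ℝ)+(m:ℝ)^2) * ((1+(n:ℝ)^2) * (1+(p:ℝ)^2)))^(-(1+s/3)) := by
  set v : ℝ := (m:ℝ)^2 + (n:ℝ)^2 + (p:ℝ)^2 with hv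
  set Q : ℝ := ((1:ℝ)+(m:ℝ)^2) * ((1+(n:ℝ)^2) * (1+(p:ℝ)^2)) with hQ
  have hQpos : 0 < Q := by positivity
  have hupos : (0:ℝ) < u := by linarith
  have hQcube : Q ≤ (1+v)^(3:ℕ) := by
    have e : (1+v)^(3:ℕ) = (1+v)*((1+v)*(1+v)) := by ring
    rw [e]
    have h1 : (1:ℝ)+(m:ℝ)^2 ≤ 1+v := by simp only [hv]; nlinarith [sq_nonneg (n:ℝ), sq_nonneg (p:ℝ)]
    have h2 : (1:ℝ)+(n:ℝ)^2 ≤ 1+v := by simp only [hv]; nlinarith [sq_nonneg (m:ℝ), sq_nonneg (p:ℝ)]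
    have h3 : (1:ℝ)+(p:ℝ)^2 ≤ 1+v := by simp only [hv]; nlinarith [sq_nonneg (m:ℝ), sq_nonneg (n:ℝ)]
    simp only [hQ]
    gcongr <;> positivity
  have hQthird : Q^((1:ℝ)/3) ≤ 1 + v := by
    have h1 : Q^((1:ℝ)/3) ≤ ((1+v)^(3:ℕ))^((1:ℝ)/3) :=
      Real.rpow_le_rpow hQpos.le hQcube (by norm_num)
    have h2 : ((1+v)^(3:ℕ))^((1:ℝ)/3) = 1+v := by
      rw [← Real.rpow_natCast (1+v) 3, ← Real.rpow_mul (by linarith)]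
      norm_num
    linarith [h1, h2.le, h2.ge]
  have h2u : 1 + v ≤ 2*u := by linarith
  have key : Q^(1+s/3) ≤ 2^(s+3) * u^(s+3) := by
    have e1 : Q^(1+s/3) = (Q^((1:ℝ)/3))^(s+3) := by
      rw [← Real.rpow_mul hQpos.le]
      congr 1; ring
    rw [e1]
    have h3 : (Q^((1:ℝ)/3))^(s+3) ≤ (2*u)^(s+3) :=
      Real.rpow_le_rpow (Real.rpow_nonneg hQpos.le _) (le_trans hQthird h2u) (by linarith)
    rwa [Real.mul_rpow (by norm_num) hupos.le] at h3
  rw [Real.rpow_neg hupos.le, Real.rpow_neg hQpos.le]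
  rw [show (2:ℝ)^(s+3) * (Q^(1+s/3))⁻¹ = (Q^(1+s/3) / 2^(s+3))⁻¹ by
    field_simp]
  apply inv_anti₀
  · positivity
  · rw [div_le_iff₀ (by positivity)]
    calc Q^(1+s/3) ≤ 2^(s+3) * u^(s+3) := key
      _ = u^(s+3) * 2^(s+3) := by ring

lemma Eblock_eq (a s : ℝ) (m n p : ℤ) (h : ¬(m = 0 ∧ n = 0 ∧ p = 0)) :
    Eblock a s m n p =
      ((F0 (a^2) s (2*(m:ℝ)) (2*(n:ℝ)) (2*(p:ℝ)) - F0 (a^2) s (2*(m:ℝ)+1) (2*(n:ℝ)) (2*(p:ℝ)))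
        - (F0 (a^2) s (2*(m:ℝ)) (2*(n:ℝ)+1) (2*(p:ℝ))
            - F0 (a^2) s (2*(m:ℝ)+1) (2*(n:ℝ)+1) (2*(p:ℝ))))
      - ((F0 (a^2) s (2*(m:ℝ)) (2*(n:ℝ)) (2*(p:ℝ)+1)
            - F0 (a^2) s (2*(m:ℝ)+1) (2*(n:ℝ)) (2*(p:ℝ)+1))
        - (F0 (a^2) s (2*(m:ℝ)) (2*(n:ℝ)+1) (2*(p:ℝ)+1)
            - F0 (a^2) s (2*(m:ℝ)+1) (2*(n:ℝ)+1) (2*(p:ℝ)+1))) := by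
  unfold Eblock
  simp only [sum_two, Prod.mk.injEq]
  rw [if_neg (by omega), if_neg (by omega), if_neg (by omega), if_neg (by omega),
    if_neg (by omega), if_neg (by omega), if_neg (by omega), if_neg (by omega)]
  rw [show (2*m + 2*n + 2*p : ℤ) = 2*(m+n+p) by ring,
    show (2*m + 2*n + (2*p+1) : ℤ) = 2*(m+n+p)+1 by ring,
    show (2*m + (2*n+1) + 2*p : ℤ) = 2*(m+n+p)+1 by ring,
    show (2*m + (2*n+1) + (2*p+1) : ℤ) = 2*(m+n+p+1) by ring,
    show (2*m+1 + 2*n + 2*p : ℤ) = 2*(m+n+p)+1 by ring,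
    show (2*m+1 + 2*n + (2*p+1) : ℤ) = 2*(m+n+p+1) by ring,
    show (2*m+1 + (2*n+1) + 2*p : ℤ) = 2*(m+n+p+1) by ring,
    show (2*m+1 + (2*n+1) + (2*p+1) : ℤ) = 2*(m+n+p+1)+1 by ring]
  simp only [z0, z1, one_mul, neg_one_mul]
  unfold F0
  push_cast
  ring

lemma Eblock_bound (a s : ℝ) (hs : 0 < s) (m n p : ℤ) (h : ¬(m = 0 ∧ n = 0 ∧ p = 0)) :
    |Eblock a s m n p| ≤ (216 * 2^(s+3) * (s*(s+1)*(s+2))) *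
      (((1:ℝ)+(m:ℝ)^2) * (((1:ℝ)+(n:ℝ)^2) * ((1:ℝ)+(p:ℝ)^2)))^(-(1/2+s/3)) := by
  have hone : (1:ℝ) ≤ (m:ℝ)^2 + (n:ℝ)^2 + (p:ℝ)^2 := by
    have hZ : (1:ℤ) ≤ m^2 + n^2 + p^2 := by
      rcases (by tauto : m ≠ 0 ∨ n ≠ 0 ∨ p ≠ 0) with h' | h' | h' <;>
        nlinarith [sq_nonneg m, sq_nonneg n, sq_nonneg p, sq_abs m, sq_abs n, sq_abs p,
          Int.one_le_abs h']
    exact_mod_cast hZ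
  rw [Eblock_eq a s m n p h]
  set Q : ℝ := ((1:ℝ)+(m:ℝ)^2) * (((1:ℝ)+(n:ℝ)^2) * ((1:ℝ)+(p:ℝ)^2)) with hQ
  have hQpos : 0 < Q := by positivity
  apply triple_diff_bound (a^2) s hs (sq_nonneg a)
  · intro x hx y hy z hz
    have h1 := (coord_abs hx).2
    have h2 := (coord_abs hy).2
    have h3 := (coord_abs hz).2
    nlinarith [sq_nonneg a]
  · intro x hx y hy z hz
    obtain ⟨hxa, hx2⟩ := coord_abs hx
    obtain ⟨hya, hy2⟩ := coord_abs hy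
    obtain ⟨hza, hz2⟩ := coord_abs hz
    have hbx : |x| ≤ 3*((1:ℝ)+(m:ℝ)^2)^((1:ℝ)/2) := le_trans hxa two_abs_le
    have hby : |y| ≤ 3*((1:ℝ)+(n:ℝ)^2)^((1:ℝ)/2) := le_trans hya two_abs_le
    have hbz : |z| ≤ 3*((1:ℝ)+(p:ℝ)^2)^((1:ℝ)/2) := le_trans hza two_abs_le
    have hu : (a^2 + x^2+y^2+z^2)^(-(s+3)) ≤ 2^(s+3) * Q^(-(1+s/3)) := by
      rw [hQ]
      exact inv_pow_bound3 s hs _ m n p hone (by nlinarith [sq_nonneg a])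
    calc 8*s*(s+1)*(s+2)*|x| * |y| * |z| * (a^2 + x^2+y^2+z^2)^(-(s+3))
        ≤ 8*s*(s+1)*(s+2)*(3*((1:ℝ)+(m:ℝ)^2)^((1:ℝ)/2)) * (3*((1:ℝ)+(n:ℝ)^2)^((1:ℝ)/2))
            * (3*((1:ℝ)+(p:ℝ)^2)^((1:ℝ)/2)) * (2^(s+3) * Q^(-(1+s/3))) := by
          have n1 : (0:ℝ) ≤ 8*s*(s+1)*(s+2) := by positivity
          gcongr <;> first
            | exact hbx | exact hby | exact hbz | exact hu | positivity
      _ = (216 * 2^(s+3) * (s*(s+1)*(s+2))) *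
            ((((1:ℝ)+(m:ℝ)^2)^((1:ℝ)/2) * (((1:ℝ)+(n:ℝ)^2)^((1:ℝ)/2)
              * ((1:ℝ)+(p:ℝ)^2)^((1:ℝ)/2))) * Q^(-(1+s/3))) := by ring
      _ = (216 * 2^(s+3) * (s*(s+1)*(s+2))) * (Q^((1:ℝ)/2) * Q^(-(1+s/3))) := by
          have ehalf : ((1:ℝ)+(m:ℝ)^2)^((1:ℝ)/2) * (((1:ℝ)+(n:ℝ)^2)^((1:ℝ)/2)
              * ((1:ℝ)+(p:ℝ)^2)^((1:ℝ)/2)) = Q^((1:ℝ)/2) := by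
            rw [hQ, Real.mul_rpow (by positivity) (by positivity),
              Real.mul_rpow (by positivity) (by positivity)]
          rw [← ehalf]
      _ = (216 * 2^(s+3) * (s*(s+1)*(s+2))) * Q^(-(1/2+s/3)) := by
          rw [← Real.rpow_add hQpos]
          congr 1
          ring

lemma inv_pow_bound2 (s w : ℝ) (hs : 0 < s) (hw : 1 ≤ w) (u : ℝ) (n p : ℤ)
    (hu : w + (n:ℝ)^2 + (p:ℝ)^2 ≤ u) :
    u^(-(s+2)) ≤ w^(-(s/2)) * (((1:ℝ)+(n:ℝ)^2) * ((1:ℝ)+(p:ℝ)^2))^(-(1+s/4)) := by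
  set v : ℝ := (n:ℝ)^2 + (p:ℝ)^2 with hv
  set Q : ℝ := ((1:ℝ)+(n:ℝ)^2) * ((1:ℝ)+(p:ℝ)^2) with hQ
  have hQpos : 0 < Q := by positivity
  have hv0 : 0 ≤ v := by positivity
  have hupos : (0:ℝ) < u := by nlinarith
  have hQsq : Q ≤ (1+v)^(2:ℕ) := by
    simp only [hQ, hv]
    nlinarith [sq_nonneg ((n:ℝ)^2 - (p:ℝ)^2), sq_nonneg ((n:ℝ)*(p:ℝ)),
      mul_nonneg (sq_nonneg (n:ℝ)) (sq_nonneg (p:ℝ))]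
  have key : w^(s/2) * Q^(1+s/4) ≤ u^(s+2) := by
    have e1 : u^(s+2) = u^(s/2) * u^(2+s/2) := by
      rw [← Real.rpow_add hupos]; congr 1; ring
    have h1 : w^(s/2) ≤ u^(s/2) := Real.rpow_le_rpow (by linarith) (by nlinarith) (by positivity)
    have h2 : Q^(1+s/4) ≤ u^(2+s/2) := by
      have e2 : Q^(1+s/4) ≤ ((1+v)^(2:ℕ))^(1+s/4) :=
        Real.rpow_le_rpow hQpos.le hQsq (by positivity)
      have e3 : ((1+v)^(2:ℕ))^(1+s/4) = (1+v)^(2+s/2) := by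
        rw [← Real.rpow_natCast (1+v) 2, ← Real.rpow_mul (by linarith)]
        congr 1
        push_cast
        ring
      have e4 : (1+v)^(2+s/2) ≤ u^(2+s/2) :=
        Real.rpow_le_rpow (by linarith) (by nlinarith) (by positivity)
      calc Q^(1+s/4) ≤ ((1+v)^(2:ℕ))^(1+s/4) := e2
        _ = (1+v)^(2+s/2) := e3
        _ ≤ u^(2+s/2) := e4
    calc w^(s/2) * Q^(1+s/4) ≤ u^(s/2) * u^(2+s/2) := by
          apply mul_le_mul h1 h2 (Real.rpow_nonneg hQpos.le _) (Real.rpow_nonneg hupos.le _)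
      _ = u^(s+2) := e1.symm
  rw [Real.rpow_neg hupos.le, Real.rpow_neg (by linarith : (0:ℝ) ≤ w), Real.rpow_neg hQpos.le]
  rw [show (w^(s/2))⁻¹ * (Q^(1+s/4))⁻¹ = (w^(s/2) * Q^(1+s/4))⁻¹ by rw [mul_inv]]
  exact inv_anti₀ (by positivity) key


lemma inv_pow_bound1 (s w : ℝ) (hs : 0 < s) (hw : 1 ≤ w) (u : ℝ) (n : ℤ)
    (hu : w + (n:ℝ)^2 ≤ u) :
    u^(-(s+1)) ≤ w^(-(s/2)) * ((1:ℝ)+(n:ℝ)^2)^(-(1+s/2)) := by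
  set Q : ℝ := (1:ℝ)+(n:ℝ)^2 with hQ
  have hQpos : 0 < Q := by positivity
  have hupos : (0:ℝ) < u := by nlinarith [sq_nonneg (n:ℝ)]
  have key : w^(s/2) * Q^(1+s/2) ≤ u^(s+1) := by
    have e1 : u^(s+1) = u^(s/2) * u^(1+s/2) := by
      rw [← Real.rpow_add hupos]; congr 1; ring
    have h1 : w^(s/2) ≤ u^(s/2) :=
      Real.rpow_le_rpow (by linarith) (by nlinarith [sq_nonneg (n:ℝ)]) (by positivity)
    have h2 : Q^(1+s/2) ≤ u^(1+s/2) :=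
      Real.rpow_le_rpow hQpos.le (by simp only [hQ]; nlinarith) (by positivity)
    calc w^(s/2) * Q^(1+s/2) ≤ u^(s/2) * u^(1+s/2) :=
          mul_le_mul h1 h2 (Real.rpow_nonneg hQpos.le _) (Real.rpow_nonneg hupos.le _)
      _ = u^(s+1) := e1.symm
  rw [Real.rpow_neg hupos.le, Real.rpow_neg (by linarith : (0:ℝ) ≤ w), Real.rpow_neg hQpos.le,
    show (w^(s/2))⁻¹ * (Q^(1+s/2))⁻¹ = (w^(s/2) * Q^(1+s/2))⁻¹ by rw [mul_inv]]
  exact inv_anti₀ (by positivity) key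

lemma E2_bound (w s : ℝ) (hw : 1 ≤ w) (hs : 0 < s) (n p : ℤ) :
    |(G0 w s (2*(n:ℝ)) (2*(p:ℝ)) - G0 w s (2*(n:ℝ)+1) (2*(p:ℝ)))
      - (G0 w s (2*(n:ℝ)) (2*(p:ℝ)+1) - G0 w s (2*(n:ℝ)+1) (2*(p:ℝ)+1))|
    ≤ 36*s*(s+1) * w^(-(s/2)) *
        (((1:ℝ)+(n:ℝ)^2)^(-(1/2+s/4)) * ((1:ℝ)+(p:ℝ)^2)^(-(1/2+s/4))) := by
  apply double_diff_bound w s hs (by linarith)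
  · intro y hy z hz; nlinarith [sq_nonneg y, sq_nonneg z]
  · intro y hy z hz
    obtain ⟨hya, hy2⟩ := coord_abs hy
    obtain ⟨hza, hz2⟩ := coord_abs hz
    have hby : |y| ≤ 3*((1:ℝ)+(n:ℝ)^2)^((1:ℝ)/2) := le_trans hya two_abs_le
    have hbz : |z| ≤ 3*((1:ℝ)+(p:ℝ)^2)^((1:ℝ)/2) := le_trans hza two_abs_le
    have hu : (w + y^2+z^2)^(-(s+2))
        ≤ w^(-(s/2)) * (((1:ℝ)+(n:ℝ)^2) * ((1:ℝ)+(p:ℝ)^2))^(-(1+s/4)) :=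
      inv_pow_bound2 s w hs hw _ n p (by nlinarith)
    calc 4*s*(s+1)*|y| * |z| * (w + y^2+z^2)^(-(s+2))
        ≤ 4*s*(s+1)*(3*((1:ℝ)+(n:ℝ)^2)^((1:ℝ)/2)) * (3*((1:ℝ)+(p:ℝ)^2)^((1:ℝ)/2))
            * (w^(-(s/2)) * (((1:ℝ)+(n:ℝ)^2) * ((1:ℝ)+(p:ℝ)^2))^(-(1+s/4))) := by
          gcongr <;> first | exact hby | exact hbz | exact hu | positivity
      _ = 36*s*(s+1) * w^(-(s/2)) *
            ((((1:ℝ)+(n:ℝ)^2)^((1:ℝ)/2) * ((1:ℝ)+(n:ℝ)^2)^(-(1+s/4)))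
              * (((1:ℝ)+(p:ℝ)^2)^((1:ℝ)/2) * ((1:ℝ)+(p:ℝ)^2)^(-(1+s/4)))) := by
          rw [Real.mul_rpow (by positivity) (by positivity)]
          ring
      _ = 36*s*(s+1) * w^(-(s/2)) *
            (((1:ℝ)+(n:ℝ)^2)^(-(1/2+s/4)) * ((1:ℝ)+(p:ℝ)^2)^(-(1/2+s/4))) := by
          rw [← Real.rpow_add (by positivity : (0:ℝ) < (1:ℝ)+(n:ℝ)^2),
            ← Real.rpow_add (by positivity : (0:ℝ) < (1:ℝ)+(p:ℝ)^2),
            show (1:ℝ)/2 + -(1+s/4) = -(1/2+s/4) by ring]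

lemma mixed_bound (w s : ℝ) (hw : 1 ≤ w) (hs : 0 < s) (M K : ℕ) :
    |∑ i ∈ Icc (-(2*(M:ℤ))) (2*(M:ℤ)-1), ∑ k ∈ Icc (-(K:ℤ)) (K:ℤ),
        (-1:ℝ)^(i+k) * (w + (i:ℝ)^2 + (k:ℝ)^2)^(-s)|
      ≤ 18*s*(∑' mm : ℤ, ((1:ℝ)+(mm:ℝ)^2)^(-(1/2+s/2))) * w^(-(s/2)) := by
  have hZsum := summable_one_add_sq (1/2+s/2) (by linarith)
  set G : ℝ → ℝ := fun x => ∑ k ∈ Icc (-(K:ℤ)) (K:ℤ), (-1:ℝ)^k * G0 w s x (k:ℝ) with hGdef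
  have hinner : ∀ i : ℤ, (∑ k ∈ Icc (-(K:ℤ)) (K:ℤ),
      (-1:ℝ)^(i+k) * (w + (i:ℝ)^2 + (k:ℝ)^2)^(-s)) = (-1:ℝ)^i * G (i:ℝ) := by
    intro i
    simp only [hGdef]
    rw [mul_sum]
    apply sum_congr rfl
    intro k _
    rw [zpow_add₀ (by norm_num : (-1:ℝ) ≠ 0)]
    unfold G0
    ring
  rw [sum_congr rfl (fun i _ => hinner i), sum_pairs (fun i => (-1:ℝ)^i * G (i:ℝ)) M]
  have hstep : ∀ n : ℤ, ((-1:ℝ)^(2*n) * G ((2*n : ℤ):ℝ) + (-1:ℝ)^(2*n+1) * G ((2*n+1 : ℤ):ℝ))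
      = G (2*(n:ℝ)) - G (2*(n:ℝ)+1) := by
    intro n
    rw [z0, z1]
    push_cast
    ring
  rw [sum_congr rfl (fun n _ => hstep n)]
  have hper : ∀ n : ℤ, |G (2*(n:ℝ)) - G (2*(n:ℝ)+1)|
      ≤ 18*s* w^(-(s/2)) * ((1:ℝ)+(n:ℝ)^2)^(-(1/2+s/2)) := by
    intro n
    apply diff_bound (t' := fun x => ∑ k ∈ Icc (-(K:ℤ)) (K:ℤ), (-1:ℝ)^k * G1 w s x (k:ℝ))
    · intro x hx
      apply HasDerivAt.fun_sum
      intro k _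
      exact (dg0y w s (k:ℝ) x (by nlinarith [sq_nonneg x, sq_nonneg ((k:ℤ):ℝ)])).const_mul _
    · intro x hx
      obtain ⟨hxa, hx2⟩ := coord_abs hx
      have hfac : (∑ k ∈ Icc (-(K:ℤ)) (K:ℤ), (-1:ℝ)^k * G1 w s x (k:ℝ))
          = (-2*s*x) * ∑ k ∈ Icc (-(K:ℤ)) (K:ℤ), (-1:ℝ)^k * ((w + x^2) + (k:ℝ)^2)^(-(s+1)) := by
        rw [mul_sum]
        apply sum_congr rfl
        intro k _
        unfold G1
        ring_nf
      rw [hfac, abs_mul]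
      have h1 : |∑ k ∈ Icc (-(K:ℤ)) (K:ℤ), (-1:ℝ)^k * ((w + x^2) + (k:ℝ)^2)^(-(s+1))|
          ≤ 3 * (w + x^2)^(-(s+1)) :=
        alt_sym_bound (w + x^2) (s+1) (by nlinarith [sq_nonneg x]) (by linarith) K
      have h2 : |(-2*s*x)| ≤ 2*s*(2*|(n:ℝ)|+1) := by
        rw [show (-2*s*x) = (-(2*s))*x by ring, abs_mul, abs_neg,
          abs_of_nonneg (by linarith : (0:ℝ) ≤ 2*s)]
        have := hxa
        nlinarith [abs_nonneg x, abs_nonneg (n:ℝ)]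
      have h3 : (w + x^2)^(-(s+1)) ≤ w^(-(s/2)) * ((1:ℝ)+(n:ℝ)^2)^(-(1+s/2)) :=
        inv_pow_bound1 s w hs hw _ n (by nlinarith)
      calc |(-2*s*x)| * |∑ k ∈ Icc (-(K:ℤ)) (K:ℤ), (-1:ℝ)^k * ((w + x^2) + (k:ℝ)^2)^(-(s+1))|
          ≤ (2*s*(2*|(n:ℝ)|+1)) * (3 * (w + x^2)^(-(s+1))) := by
            apply mul_le_mul h2 h1 (abs_nonneg _) (by positivity)
        _ ≤ (2*s*(3*((1:ℝ)+(n:ℝ)^2)^((1:ℝ)/2))) * (3 * (w^(-(s/2)) * ((1:ℝ)+(n:ℝ)^2)^(-(1+s/2)))) := by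
            gcongr <;> first | exact two_abs_le | exact h3 | positivity
        _ = 18*s* w^(-(s/2)) * (((1:ℝ)+(n:ℝ)^2)^((1:ℝ)/2) * ((1:ℝ)+(n:ℝ)^2)^(-(1+s/2))) := by
            ring
        _ = 18*s* w^(-(s/2)) * ((1:ℝ)+(n:ℝ)^2)^(-(1/2+s/2)) := by
            rw [← Real.rpow_add (by positivity : (0:ℝ) < (1:ℝ)+(n:ℝ)^2),
              show (1:ℝ)/2 + -(1+s/2) = -(1/2+s/2) by ring]
  calc |∑ n ∈ Icc (-(M:ℤ)) ((M:ℤ)-1), (G (2*(n:ℝ)) - G (2*(n:ℝ)+1))|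
      ≤ ∑ n ∈ Icc (-(M:ℤ)) ((M:ℤ)-1), |G (2*(n:ℝ)) - G (2*(n:ℝ)+1)| :=
        abs_sum_le_sum_abs _ _
    _ ≤ ∑ n ∈ Icc (-(M:ℤ)) ((M:ℤ)-1), 18*s* w^(-(s/2)) * ((1:ℝ)+(n:ℝ)^2)^(-(1/2+s/2)) :=
        sum_le_sum (fun n _ => hper n)
    _ = 18*s* w^(-(s/2)) * ∑ n ∈ Icc (-(M:ℤ)) ((M:ℤ)-1), ((1:ℝ)+(n:ℝ)^2)^(-(1/2+s/2)) := by
        rw [mul_sum]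
    _ ≤ 18*s* w^(-(s/2)) * (∑' mm : ℤ, ((1:ℝ)+(mm:ℝ)^2)^(-(1/2+s/2))) := by
        apply mul_le_mul_of_nonneg_left _ (by positivity)
        exact Summable.sum_le_tsum _ (fun i _ => by positivity) hZsum
    _ = 18*s*(∑' mm : ℤ, ((1:ℝ)+(mm:ℝ)^2)^(-(1/2+s/2))) * w^(-(s/2)) := by ring

lemma covered2_bound (w s : ℝ) (hw : 1 ≤ w) (hs : 0 < s) (M2 M3 : ℕ) :
    |∑ j ∈ Icc (-(2*(M2:ℤ))) (2*(M2:ℤ)-1), ∑ k ∈ Icc (-(2*(M3:ℤ))) (2*(M3:ℤ)-1),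
        (-1:ℝ)^(j+k) * (w + (j:ℝ)^2 + (k:ℝ)^2)^(-s)|
      ≤ 36*s*(s+1)*(∑' mm : ℤ, ((1:ℝ)+(mm:ℝ)^2)^(-(1/2+s/4)))^2 * w^(-(s/2)) := by
  have hZsum := summable_one_add_sq (1/2+s/4) (by linarith)
  set b : ℤ → ℤ → ℝ := fun j k => (-1:ℝ)^(j+k) * (w + (j:ℝ)^2 + (k:ℝ)^2)^(-s) with hb
  -- blockify j
  rw [sum_pairs (fun j => ∑ k ∈ Icc (-(2*(M3:ℤ))) (2*(M3:ℤ)-1), b j k) M2]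
  -- per n, blockify k
  have hstep : ∀ n : ℤ,
      ((∑ k ∈ Icc (-(2*(M3:ℤ))) (2*(M3:ℤ)-1), b (2*n) k)
        + ∑ k ∈ Icc (-(2*(M3:ℤ))) (2*(M3:ℤ)-1), b (2*n+1) k)
      = ∑ p ∈ Icc (-(M3:ℤ)) ((M3:ℤ)-1),
          ((G0 w s (2*(n:ℝ)) (2*(p:ℝ)) - G0 w s (2*(n:ℝ)+1) (2*(p:ℝ)))
            - (G0 w s (2*(n:ℝ)) (2*(p:ℝ)+1) - G0 w s (2*(n:ℝ)+1) (2*(p:ℝ)+1))) := by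
    intro n
    rw [← sum_add_distrib, sum_pairs (fun k => b (2*n) k + b (2*n+1) k) M3]
    apply sum_congr rfl
    intro p _
    simp only [hb]
    rw [show 2*n + 2*p = 2*(n+p) by ring, show 2*n + (2*p+1) = 2*(n+p)+1 by ring,
      show 2*n+1 + 2*p = 2*(n+p)+1 by ring, show 2*n+1 + (2*p+1) = 2*(n+p+1) by ring,
      z0, z1, z0]
    unfold G0
    push_cast
    ring
  rw [sum_congr rfl (fun n _ => hstep n)]
  have habs : ∀ n p : ℤ,
      |(G0 w s (2*(n:ℝ)) (2*(p:ℝ)) - G0 w s (2*(n:ℝ)+1) (2*(p:ℝ)))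
        - (G0 w s (2*(n:ℝ)) (2*(p:ℝ)+1) - G0 w s (2*(n:ℝ)+1) (2*(p:ℝ)+1))|
      ≤ 36*s*(s+1) * w^(-(s/2)) *
          (((1:ℝ)+(n:ℝ)^2)^(-(1/2+s/4)) * ((1:ℝ)+(p:ℝ)^2)^(-(1/2+s/4))) :=
    fun n p => E2_bound w s hw hs n p
  calc |∑ n ∈ Icc (-(M2:ℤ)) ((M2:ℤ)-1), ∑ p ∈ Icc (-(M3:ℤ)) ((M3:ℤ)-1),
        ((G0 w s (2*(n:ℝ)) (2*(p:ℝ)) - G0 w s (2*(n:ℝ)+1) (2*(p:ℝ)))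
          - (G0 w s (2*(n:ℝ)) (2*(p:ℝ)+1) - G0 w s (2*(n:ℝ)+1) (2*(p:ℝ)+1)))|
      ≤ ∑ n ∈ Icc (-(M2:ℤ)) ((M2:ℤ)-1), ∑ p ∈ Icc (-(M3:ℤ)) ((M3:ℤ)-1),
          (36*s*(s+1) * w^(-(s/2)) *
            (((1:ℝ)+(n:ℝ)^2)^(-(1/2+s/4)) * ((1:ℝ)+(p:ℝ)^2)^(-(1/2+s/4)))) := by
        calc _ ≤ ∑ n ∈ Icc (-(M2:ℤ)) ((M2:ℤ)-1), |∑ p ∈ Icc (-(M3:ℤ)) ((M3:ℤ)-1),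
              ((G0 w s (2*(n:ℝ)) (2*(p:ℝ)) - G0 w s (2*(n:ℝ)+1) (2*(p:ℝ)))
                - (G0 w s (2*(n:ℝ)) (2*(p:ℝ)+1) - G0 w s (2*(n:ℝ)+1) (2*(p:ℝ)+1)))| :=
              abs_sum_le_sum_abs _ _
          _ ≤ _ := by
              apply sum_le_sum
              intro n _
              calc _ ≤ ∑ p ∈ Icc (-(M3:ℤ)) ((M3:ℤ)-1),
                    |(G0 w s (2*(n:ℝ)) (2*(p:ℝ)) - G0 w s (2*(n:ℝ)+1) (2*(p:ℝ)))
                      - (G0 w s (2*(n:ℝ)) (2*(p:ℝ)+1) - G0 w s (2*(n:ℝ)+1) (2*(p:ℝ)+1))| :=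
                    abs_sum_le_sum_abs _ _
                _ ≤ _ := sum_le_sum (fun p _ => habs n p)
    _ = 36*s*(s+1) * w^(-(s/2)) *
          ((∑ n ∈ Icc (-(M2:ℤ)) ((M2:ℤ)-1), ((1:ℝ)+(n:ℝ)^2)^(-(1/2+s/4)))
            * (∑ p ∈ Icc (-(M3:ℤ)) ((M3:ℤ)-1), ((1:ℝ)+(p:ℝ)^2)^(-(1/2+s/4)))) := by
        rw [sum_mul_sum]
        rw [mul_sum]
        apply sum_congr rfl
        intro n _
        rw [mul_sum]
    _ ≤ 36*s*(s+1) * w^(-(s/2)) *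
          ((∑' mm : ℤ, ((1:ℝ)+(mm:ℝ)^2)^(-(1/2+s/4)))
            * (∑' mm : ℤ, ((1:ℝ)+(mm:ℝ)^2)^(-(1/2+s/4)))) := by
        apply mul_le_mul_of_nonneg_left _ (by positivity)
        apply mul_le_mul (Summable.sum_le_tsum _ (fun i _ => by positivity) hZsum)
          (Summable.sum_le_tsum _ (fun i _ => by positivity) hZsum)
          (sum_nonneg (fun i _ => by positivity))
          (tsum_nonneg (fun i => by positivity))
    _ = 36*s*(s+1)*(∑' mm : ℤ, ((1:ℝ)+(mm:ℝ)^2)^(-(1/2+s/4)))^2 * w^(-(s/2)) := by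
        ring

lemma sym2_bound (w s : ℝ) (hw : 1 ≤ w) (hs : 0 < s) (J K : ℕ) :
    |∑ j ∈ Icc (-(J:ℤ)) (J:ℤ), ∑ k ∈ Icc (-(K:ℤ)) (K:ℤ),
        (-1:ℝ)^(j+k) * (w + (j:ℝ)^2 + (k:ℝ)^2)^(-s)|
      ≤ (18*s*(∑' mm : ℤ, ((1:ℝ)+(mm:ℝ)^2)^(-(1/2+s/2))) + 9) * w^(-(s/2)) := by
  set M2 : ℕ := J/2 + 1 with hM2
  have hJM : (J:ℤ) ≤ 2*(M2:ℤ) - 1 := by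
    have : J + 1 ≤ 2*M2 := by omega
    have := (Int.ofNat_le.2 this)
    push_cast at this ⊢
    omega
  have hsub : Icc (-(J:ℤ)) (J:ℤ) ⊆ Icc (-(2*(M2:ℤ))) (2*(M2:ℤ)-1) := by
    intro x hx
    simp only [mem_Icc] at hx ⊢
    omega
  set F : ℤ → ℝ := fun j => ∑ k ∈ Icc (-(K:ℤ)) (K:ℤ),
      (-1:ℝ)^(j+k) * (w + (j:ℝ)^2 + (k:ℝ)^2)^(-s) with hF
  have hsplit : ∑ j ∈ Icc (-(2*(M2:ℤ))) (2*(M2:ℤ)-1) \ Icc (-(J:ℤ)) (J:ℤ), F j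
      + ∑ j ∈ Icc (-(J:ℤ)) (J:ℤ), F j = ∑ j ∈ Icc (-(2*(M2:ℤ))) (2*(M2:ℤ)-1), F j :=
    sum_sdiff hsub
  have hcov : |∑ j ∈ Icc (-(2*(M2:ℤ))) (2*(M2:ℤ)-1), F j|
      ≤ 18*s*(∑' mm : ℤ, ((1:ℝ)+(mm:ℝ)^2)^(-(1/2+s/2))) * w^(-(s/2)) :=
    mixed_bound w s hw hs M2 K
  have hFc : ∀ c : ℤ, |F c| ≤ 3 * w^(-(s/2)) := by
    intro c
    have hfac : F c = (-1:ℝ)^c * ∑ k ∈ Icc (-(K:ℤ)) (K:ℤ),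
        (-1:ℝ)^k * ((w + (c:ℝ)^2) + (k:ℝ)^2)^(-(s)) := by
      simp only [hF]
      rw [mul_sum]
      apply sum_congr rfl
      intro k _
      rw [zpow_add₀ (by norm_num : (-1:ℝ) ≠ 0)]
      ring
    rw [hfac, abs_mul]
    have habs1 : |(-1:ℝ)^c| = 1 := by
      rcases Int.even_or_odd c with he | ho
      · rw [he.neg_one_zpow]; norm_num
      · rw [ho.neg_one_zpow]; norm_num
    rw [habs1, one_mul]
    have h1 : |∑ k ∈ Icc (-(K:ℤ)) (K:ℤ), (-1:ℝ)^k * ((w + (c:ℝ)^2) + (k:ℝ)^2)^(-(s))|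
        ≤ 3 * (w + (c:ℝ)^2)^(-s) :=
      alt_sym_bound (w + (c:ℝ)^2) s (by nlinarith [sq_nonneg (c:ℝ)]) hs K
    have h2 : (w + (c:ℝ)^2)^(-s) ≤ w^(-s) :=
      rpow_mono_neg (by linarith) (by nlinarith [sq_nonneg (c:ℝ)]) hs.le
    have h3 : w^(-s) ≤ w^(-(s/2)) :=
      Real.rpow_le_rpow_of_exponent_le hw (by linarith)
    linarith
  have hcard : ((Icc (-(2*(M2:ℤ))) (2*(M2:ℤ)-1) \ Icc (-(J:ℤ)) (J:ℤ)).card : ℝ) ≤ 3 := by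
    have hc : (Icc (-(2*(M2:ℤ))) (2*(M2:ℤ)-1) \ Icc (-(J:ℤ)) (J:ℤ)).card
        = (Icc (-(2*(M2:ℤ))) (2*(M2:ℤ)-1)).card - (Icc (-(J:ℤ)) (J:ℤ)).card :=
      card_sdiff_of_subset hsub
    rw [hc, Int.card_Icc, Int.card_Icc]
    have h1 : (2*(M2:ℤ)-1 + 1 - -(2*(M2:ℤ))).toNat = 4*M2 := by omega
    have h2 : ((J:ℤ) + 1 - -(J:ℤ)).toNat = 2*J+1 := by omega
    rw [h1, h2]
    have h3 : 4*M2 - (2*J+1) ≤ 3 := by omega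
    calc ((4*M2 - (2*J+1) : ℕ) : ℝ) ≤ ((3:ℕ):ℝ) := by exact_mod_cast h3
      _ = 3 := by norm_num
  have hExt : |∑ j ∈ Icc (-(2*(M2:ℤ))) (2*(M2:ℤ)-1) \ Icc (-(J:ℤ)) (J:ℤ), F j|
      ≤ 9 * w^(-(s/2)) := by
    calc |∑ j ∈ Icc (-(2*(M2:ℤ))) (2*(M2:ℤ)-1) \ Icc (-(J:ℤ)) (J:ℤ), F j|
        ≤ ∑ j ∈ Icc (-(2*(M2:ℤ))) (2*(M2:ℤ)-1) \ Icc (-(J:ℤ)) (J:ℤ), |F j| :=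
          abs_sum_le_sum_abs _ _
      _ ≤ ∑ _j ∈ Icc (-(2*(M2:ℤ))) (2*(M2:ℤ)-1) \ Icc (-(J:ℤ)) (J:ℤ), 3 * w^(-(s/2)) :=
          sum_le_sum (fun j _ => hFc j)
      _ = ((Icc (-(2*(M2:ℤ))) (2*(M2:ℤ)-1) \ Icc (-(J:ℤ)) (J:ℤ)).card : ℝ) * (3 * w^(-(s/2))) := by
          rw [sum_const, nsmul_eq_mul]
      _ ≤ 3 * (3 * w^(-(s/2))) := by
          apply mul_le_mul_of_nonneg_right hcard (by positivity)
      _ = 9 * w^(-(s/2)) := by ring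
  have : ∑ j ∈ Icc (-(J:ℤ)) (J:ℤ), F j = ∑ j ∈ Icc (-(2*(M2:ℤ))) (2*(M2:ℤ)-1), F j
      - ∑ j ∈ Icc (-(2*(M2:ℤ))) (2*(M2:ℤ)-1) \ Icc (-(J:ℤ)) (J:ℤ), F j := by
    linarith [hsplit]
  rw [show (∑ j ∈ Icc (-(J:ℤ)) (J:ℤ), ∑ k ∈ Icc (-(K:ℤ)) (K:ℤ),
      (-1:ℝ)^(j+k) * (w + (j:ℝ)^2 + (k:ℝ)^2)^(-s)) = ∑ j ∈ Icc (-(J:ℤ)) (J:ℤ), F j from rfl,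
    this]
  calc |∑ j ∈ Icc (-(2*(M2:ℤ))) (2*(M2:ℤ)-1), F j
        - ∑ j ∈ Icc (-(2*(M2:ℤ))) (2*(M2:ℤ)-1) \ Icc (-(J:ℤ)) (J:ℤ), F j|
      ≤ |∑ j ∈ Icc (-(2*(M2:ℤ))) (2*(M2:ℤ)-1), F j|
        + |∑ j ∈ Icc (-(2*(M2:ℤ))) (2*(M2:ℤ)-1) \ Icc (-(J:ℤ)) (J:ℤ), F j| := abs_sub _ _
    _ ≤ 18*s*(∑' mm : ℤ, ((1:ℝ)+(mm:ℝ)^2)^(-(1/2+s/2))) * w^(-(s/2)) + 9 * w^(-(s/2)) := by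
        linarith [hcov, hExt]
    _ = (18*s*(∑' mm : ℤ, ((1:ℝ)+(mm:ℝ)^2)^(-(1/2+s/2))) + 9) * w^(-(s/2)) := by ring


/-- the summand with origin omitted, as a total function -/
noncomputable def hterm (a s : ℝ) (Q : ℤ × ℤ × ℤ) : ℝ :=
  if Q.1 = 0 ∧ Q.2.1 = 0 ∧ Q.2.2 = 0 then 0
  else (-1 : ℝ) ^ (Q.1 + Q.2.1 + Q.2.2) *
    (a ^ 2 + (Q.1 : ℝ) ^ 2 + (Q.2.1 : ℝ) ^ 2 + (Q.2.2 : ℝ) ^ 2) ^ (-s)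

lemma Eblock_as_hterm (a s : ℝ) (m n p : ℤ) :
    Eblock a s m n p = ∑ i ∈ Icc (2*m) (2*m+1), ∑ j ∈ Icc (2*n) (2*n+1),
      ∑ k ∈ Icc (2*p) (2*p+1), hterm a s (i, j, k) := by
  unfold Eblock hterm
  apply sum_congr rfl; intro i _
  apply sum_congr rfl; intro j _
  apply sum_congr rfl; intro k _
  simp only [Prod.mk.injEq]

lemma pair_expand1 (g : ℤ → ℝ) (M : ℕ) :
    ∑ p ∈ Icc (-(M:ℤ)) ((M:ℤ)-1), ∑ k ∈ Icc (2*p) (2*p+1), g k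
      = ∑ k ∈ Icc (-(2*(M:ℤ))) (2*(M:ℤ)-1), g k := by
  rw [sum_pairs g M]
  exact sum_congr rfl (fun p _ => (sum_two g (2*p)).symm) |>.symm

lemma pair_expand2 (g : ℤ → ℤ → ℝ) (M2 M3 : ℕ) :
    ∑ n ∈ Icc (-(M2:ℤ)) ((M2:ℤ)-1), ∑ p ∈ Icc (-(M3:ℤ)) ((M3:ℤ)-1),
      (∑ j ∈ Icc (2*n) (2*n+1), ∑ k ∈ Icc (2*p) (2*p+1), g j k)
    = ∑ j ∈ Icc (-(2*(M2:ℤ))) (2*(M2:ℤ)-1), ∑ k ∈ Icc (-(2*(M3:ℤ))) (2*(M3:ℤ)-1), g j k := by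
  rw [sum_pairs (fun j => ∑ k ∈ Icc (-(2*(M3:ℤ))) (2*(M3:ℤ)-1), g j k) M2]
  apply sum_congr rfl
  intro n _
  have inner : ∀ c : ℤ, ∑ p ∈ Icc (-(M3:ℤ)) ((M3:ℤ)-1), ∑ k ∈ Icc (2*p) (2*p+1), g c k
      = ∑ k ∈ Icc (-(2*(M3:ℤ))) (2*(M3:ℤ)-1), g c k := fun c => pair_expand1 (g c) M3
  calc ∑ p ∈ Icc (-(M3:ℤ)) ((M3:ℤ)-1),
        (∑ j ∈ Icc (2*n) (2*n+1), ∑ k ∈ Icc (2*p) (2*p+1), g j k)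
      = ∑ p ∈ Icc (-(M3:ℤ)) ((M3:ℤ)-1),
          ((∑ k ∈ Icc (2*p) (2*p+1), g (2*n) k) + (∑ k ∈ Icc (2*p) (2*p+1), g (2*n+1) k)) := by
        apply sum_congr rfl; intro p _
        exact sum_two (fun j => ∑ k ∈ Icc (2*p) (2*p+1), g j k) (2*n)
    _ = (∑ p ∈ Icc (-(M3:ℤ)) ((M3:ℤ)-1), ∑ k ∈ Icc (2*p) (2*p+1), g (2*n) k)
        + ∑ p ∈ Icc (-(M3:ℤ)) ((M3:ℤ)-1), ∑ k ∈ Icc (2*p) (2*p+1), g (2*n+1) k := by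
        rw [sum_add_distrib]
    _ = (∑ k ∈ Icc (-(2*(M3:ℤ))) (2*(M3:ℤ)-1), g (2*n) k)
        + ∑ k ∈ Icc (-(2*(M3:ℤ))) (2*(M3:ℤ)-1), g (2*n+1) k := by
        rw [inner (2*n), inner (2*n+1)]

lemma pair_expand3 (g : ℤ → ℤ → ℤ → ℝ) (M1 M2 M3 : ℕ) :
    ∑ m ∈ Icc (-(M1:ℤ)) ((M1:ℤ)-1), ∑ n ∈ Icc (-(M2:ℤ)) ((M2:ℤ)-1),
      ∑ p ∈ Icc (-(M3:ℤ)) ((M3:ℤ)-1),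
        (∑ i ∈ Icc (2*m) (2*m+1), ∑ j ∈ Icc (2*n) (2*n+1), ∑ k ∈ Icc (2*p) (2*p+1), g i j k)
    = ∑ i ∈ Icc (-(2*(M1:ℤ))) (2*(M1:ℤ)-1), ∑ j ∈ Icc (-(2*(M2:ℤ))) (2*(M2:ℤ)-1),
        ∑ k ∈ Icc (-(2*(M3:ℤ))) (2*(M3:ℤ)-1), g i j k := by
  rw [sum_pairs (fun i => ∑ j ∈ Icc (-(2*(M2:ℤ))) (2*(M2:ℤ)-1),
    ∑ k ∈ Icc (-(2*(M3:ℤ))) (2*(M3:ℤ)-1), g i j k) M1]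
  apply sum_congr rfl
  intro m _
  calc ∑ n ∈ Icc (-(M2:ℤ)) ((M2:ℤ)-1), ∑ p ∈ Icc (-(M3:ℤ)) ((M3:ℤ)-1),
        (∑ i ∈ Icc (2*m) (2*m+1), ∑ j ∈ Icc (2*n) (2*n+1), ∑ k ∈ Icc (2*p) (2*p+1), g i j k)
      = ∑ n ∈ Icc (-(M2:ℤ)) ((M2:ℤ)-1), ∑ p ∈ Icc (-(M3:ℤ)) ((M3:ℤ)-1),
          ((∑ j ∈ Icc (2*n) (2*n+1), ∑ k ∈ Icc (2*p) (2*p+1), g (2*m) j k)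
            + ∑ j ∈ Icc (2*n) (2*n+1), ∑ k ∈ Icc (2*p) (2*p+1), g (2*m+1) j k) := by
        apply sum_congr rfl; intro n _
        apply sum_congr rfl; intro p _
        exact sum_two (fun i => ∑ j ∈ Icc (2*n) (2*n+1), ∑ k ∈ Icc (2*p) (2*p+1), g i j k) (2*m)
    _ = (∑ n ∈ Icc (-(M2:ℤ)) ((M2:ℤ)-1), ∑ p ∈ Icc (-(M3:ℤ)) ((M3:ℤ)-1),
          ∑ j ∈ Icc (2*n) (2*n+1), ∑ k ∈ Icc (2*p) (2*p+1), g (2*m) j k)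
        + ∑ n ∈ Icc (-(M2:ℤ)) ((M2:ℤ)-1), ∑ p ∈ Icc (-(M3:ℤ)) ((M3:ℤ)-1),
          ∑ j ∈ Icc (2*n) (2*n+1), ∑ k ∈ Icc (2*p) (2*p+1), g (2*m+1) j k := by
        rw [← sum_add_distrib]
        apply sum_congr rfl; intro n _
        rw [sum_add_distrib]
    _ = (∑ j ∈ Icc (-(2*(M2:ℤ))) (2*(M2:ℤ)-1), ∑ k ∈ Icc (-(2*(M3:ℤ))) (2*(M3:ℤ)-1), g (2*m) j k)
        + ∑ j ∈ Icc (-(2*(M2:ℤ))) (2*(M2:ℤ)-1), ∑ k ∈ Icc (-(2*(M3:ℤ))) (2*(M3:ℤ)-1),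
          g (2*m+1) j k := by
        rw [pair_expand2 (g (2*m)) M2 M3, pair_expand2 (g (2*m+1)) M2 M3]

lemma blocksum_eq (a s : ℝ) (M1 M2 M3 : ℕ) :
    ∑ P ∈ (Icc (-(M1:ℤ)) ((M1:ℤ)-1)) ×ˢ ((Icc (-(M2:ℤ)) ((M2:ℤ)-1)) ×ˢ (Icc (-(M3:ℤ)) ((M3:ℤ)-1))),
        Eblock a s P.1 P.2.1 P.2.2
      = ∑ Q ∈ (Icc (-(2*(M1:ℤ))) (2*(M1:ℤ)-1)) ×ˢ ((Icc (-(2*(M2:ℤ))) (2*(M2:ℤ)-1))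
          ×ˢ (Icc (-(2*(M3:ℤ))) (2*(M3:ℤ)-1))), hterm a s Q := by
  simp only [sum_product]
  rw [← pair_expand3 (fun i j k => hterm a s (i, j, k)) M1 M2 M3]
  apply sum_congr rfl; intro m _
  apply sum_congr rfl; intro n _
  apply sum_congr rfl; intro p _
  exact Eblock_as_hterm a s m n p

lemma Spi_as_hterm (a s : ℝ) (I J K : ℕ) :
    Spi a s I J K = ∑ Q ∈ (Icc (-(I:ℤ)) (I:ℤ)) ×ˢ ((Icc (-(J:ℤ)) (J:ℤ)) ×ˢ (Icc (-(K:ℤ)) (K:ℤ))),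
      hterm a s Q := by
  unfold Spi hterm
  rw [sum_filter]
  apply sum_congr rfl
  intro Q _
  have hiff : (Q ≠ 0) ↔ ¬(Q.1 = 0 ∧ Q.2.1 = 0 ∧ Q.2.2 = 0) := by
    constructor
    · intro hne h
      exact hne (by
        obtain ⟨h1, h2, h3⟩ := h
        exact Prod.ext h1 (Prod.ext h2 h3))
    · intro h hQ
      exact h ⟨by rw [hQ]; rfl, by rw [hQ]; rfl, by rw [hQ]; rfl⟩
  by_cases h : Q.1 = 0 ∧ Q.2.1 = 0 ∧ Q.2.2 = 0
  · rw [if_neg (by rw [hiff]; exact fun h' => h' h), if_pos h]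
  · rw [if_pos (hiff.mpr h), if_neg h]


lemma offset (s : ℝ) (hs : 0 < s) (d w : ℝ) (hd : 1 ≤ d) (hw : d^2 ≤ w) :
    w^(-(s/2)) ≤ d^(-s) := by
  have h1 : w^(-(s/2)) ≤ (d^(2:ℕ))^(-(s/2)) := by
    apply rpow_mono_neg (by positivity) _ (by positivity)
    exact_mod_cast hw
  have h2 : ((d:ℝ)^(2:ℕ))^(-(s/2)) = d^(-s) := by
    rw [← Real.rpow_natCast d 2, ← Real.rpow_mul (by linarith)]
    congr 1
    push_cast
    ring
  linarith [h1, h2.le, h2.ge]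

lemma card_ext (I M : ℕ) (h2 : 2*M ≤ I+2)
    (hsub : Icc (-(I:ℤ)) (I:ℤ) ⊆ Icc (-(2*(M:ℤ))) (2*(M:ℤ)-1)) :
    (((Icc (-(2*(M:ℤ))) (2*(M:ℤ)-1)) \ (Icc (-(I:ℤ)) (I:ℤ))).card : ℝ) ≤ 3 := by
  rw [card_sdiff_of_subset hsub, Int.card_Icc, Int.card_Icc]
  have e1 : (2*(M:ℤ)-1 + 1 - -(2*(M:ℤ))).toNat = 4*M := by omega
  have e2 : ((I:ℤ) + 1 - -(I:ℤ)).toNat = 2*I+1 := by omega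
  rw [e1, e2]
  have h3 : 4*M - (2*I+1) ≤ 3 := by omega
  calc ((4*M - (2*I+1) : ℕ) : ℝ) ≤ ((3:ℕ):ℝ) := by exact_mod_cast h3
    _ = 3 := by norm_num

noncomputable def Zc (s t : ℝ) : ℝ := ∑' mm : ℤ, ((1:ℝ)+(mm:ℝ)^2)^(-(1/2+t))

noncomputable def CT (s : ℝ) : ℝ :=
  3*(18*s*(Zc s (s/2)) + 9) + 3*(18*s*(Zc s (s/2))) + 3*(36*s*(s+1)*(Zc s (s/4))^2)

set_option maxHeartbeats 2000000 in
lemma Spi_decomp (a s : ℝ) (hs : 0 < s) (I J K : ℕ) :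
    |Spi a s I J K - ∑ P ∈ (Icc (-((I/2+1:ℕ):ℤ)) (((I/2+1:ℕ):ℤ)-1)) ×ˢ
        ((Icc (-((J/2+1:ℕ):ℤ)) (((J/2+1:ℕ):ℤ)-1)) ×ˢ (Icc (-((K/2+1:ℕ):ℤ)) (((K/2+1:ℕ):ℤ)-1))),
        Eblock a s P.1 P.2.1 P.2.2|
      ≤ CT s * (((I:ℝ)+1)^(-s) + ((J:ℝ)+1)^(-s) + ((K:ℝ)+1)^(-s)) := by
  have hZ2nonneg : 0 ≤ Zc s (s/2) := tsum_nonneg (fun i => by positivity)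
  have hZ4nonneg : 0 ≤ Zc s (s/4) := tsum_nonneg (fun i => by positivity)
  rw [blocksum_eq a s (I/2+1) (J/2+1) (K/2+1), Spi_as_hterm a s I J K]
  set M1 : ℕ := I/2+1 with hM1
  set M2 : ℕ := J/2+1 with hM2
  set M3 : ℕ := K/2+1 with hM3
  set A1 := Icc (-(I:ℤ)) (I:ℤ) with hA1
  set A2 := Icc (-(J:ℤ)) (J:ℤ) with hA2
  set A3 := Icc (-(K:ℤ)) (K:ℤ) with hA3
  set C1 := Icc (-(2*(M1:ℤ))) (2*(M1:ℤ)-1) with hC1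
  set C2 := Icc (-(2*(M2:ℤ))) (2*(M2:ℤ)-1) with hC2
  set C3 := Icc (-(2*(M3:ℤ))) (2*(M3:ℤ)-1) with hC3
  have hsub1 : A1 ⊆ C1 := by
    intro x hx; simp only [hA1, hC1, mem_Icc] at hx ⊢
    have : I + 1 ≤ 2*M1 := by omega
    have := (Int.ofNat_le.2 this); push_cast at this; omega
  have hsub2 : A2 ⊆ C2 := by
    intro x hx; simp only [hA2, hC2, mem_Icc] at hx ⊢
    have : J + 1 ≤ 2*M2 := by omega
    have := (Int.ofNat_le.2 this); push_cast at this; omega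
  have hsub3 : A3 ⊆ C3 := by
    intro x hx; simp only [hA3, hC3, mem_Icc] at hx ⊢
    have : K + 1 ≤ 2*M3 := by omega
    have := (Int.ofNat_le.2 this); push_cast at this; omega
  have hboxsub : A1 ×ˢ (A2 ×ˢ A3) ⊆ C1 ×ˢ (C2 ×ˢ C3) :=
    product_subset_product hsub1 (product_subset_product hsub2 hsub3)
  have hsplit := sum_sdiff (f := hterm a s) hboxsub
  rw [show (∑ Q ∈ A1 ×ˢ (A2 ×ˢ A3), hterm a s Q) - (∑ Q ∈ C1 ×ˢ (C2 ×ˢ C3), hterm a s Q)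
      = -(∑ Q ∈ (C1 ×ˢ (C2 ×ˢ C3)) \ (A1 ×ˢ (A2 ×ˢ A3)), hterm a s Q) from by
    linarith [hsplit], abs_neg]
  -- decompose the boundary region
  set P1 := (C1 \ A1) ×ˢ (A2 ×ˢ A3) with hP1d
  set P2 := C1 ×ˢ ((C2 \ A2) ×ˢ A3) with hP2d
  set P3 := C1 ×ˢ (C2 ×ˢ (C3 \ A3)) with hP3d
  have k1 : ∀ t : ℤ, t ∈ A1 → t ∈ C1 := fun t ht => hsub1 ht
  have k2 : ∀ t : ℤ, t ∈ A2 → t ∈ C2 := fun t ht => hsub2 ht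
  have k3 : ∀ t : ℤ, t ∈ A3 → t ∈ C3 := fun t ht => hsub3 ht
  have hdecomp : (C1 ×ˢ (C2 ×ˢ C3)) \ (A1 ×ˢ (A2 ×ˢ A3)) = (P1 ∪ P2) ∪ P3 := by
    ext ⟨x, y, z⟩
    simp only [hP1d, hP2d, hP3d, mem_sdiff, mem_product, mem_union]
    constructor
    · rintro ⟨⟨hx, hy, hz⟩, hn⟩
      by_cases h3 : z ∈ A3
      · by_cases h2 : y ∈ A2
        · exact Or.inl (Or.inl ⟨⟨hx, by tauto⟩, h2, h3⟩)
        · exact Or.inl (Or.inr ⟨hx, ⟨hy, h2⟩, h3⟩)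
      · exact Or.inr ⟨hx, hy, hz, h3⟩
    · rintro ((⟨⟨hx, hx'⟩, hy, hz⟩ | ⟨hx, ⟨hy, hy'⟩, hz⟩) | ⟨hx, hy, hz, hz'⟩)
      · exact ⟨⟨hx, k2 y hy, k3 z hz⟩, by tauto⟩
      · exact ⟨⟨hx, hy, k3 z hz⟩, by tauto⟩
      · exact ⟨⟨hx, hy, hz⟩, by tauto⟩
  have hdisj12 : Disjoint P1 P2 := by
    rw [disjoint_left]
    rintro ⟨x, y, z⟩ h1 h2
    simp only [hP1d, hP2d, mem_product, mem_sdiff] at h1 h2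
    tauto
  have hdisj3 : Disjoint (P1 ∪ P2) P3 := by
    rw [disjoint_left]
    rintro ⟨x, y, z⟩ h1 h2
    simp only [hP1d, hP2d, hP3d, mem_union, mem_product, mem_sdiff] at h1 h2
    tauto
  rw [hdecomp, sum_union hdisj3, sum_union hdisj12]
  -- generic facts about exterior coordinates
  have abs_neg_one_zpow : ∀ c : ℤ, |(-1:ℝ)^c| = 1 := by
    intro c
    rcases Int.even_or_odd c with he | ho
    · rw [he.neg_one_zpow]; norm_num
    · rw [ho.neg_one_zpow]; norm_num
  have hw_of : ∀ (c : ℤ) (N : ℕ), c ∉ Icc (-(N:ℤ)) (N:ℤ) →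
      ((1:ℝ) ≤ a^2+(c:ℝ)^2 ∧ ((N:ℝ)+1)^2 ≤ a^2+(c:ℝ)^2 ∧ c ≠ 0) := by
    intro c N hc
    have hZ : c ≤ -((N:ℤ)+1) ∨ (N:ℤ)+1 ≤ c := by
      simp only [mem_Icc] at hc; omega
    have hsq : ((N:ℤ)+1)^2 ≤ c^2 := by
      rcases hZ with h | h
      · nlinarith [Int.ofNat_nonneg N]
      · nlinarith [Int.ofNat_nonneg N]
    have hsqR : ((N:ℝ)+1)^2 ≤ (c:ℝ)^2 := by exact_mod_cast hsq
    have h1 : (1:ℝ) ≤ ((N:ℝ)+1)^2 := by nlinarith [Nat.cast_nonneg (α := ℝ) N]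
    refine ⟨by nlinarith [sq_nonneg a], by nlinarith [sq_nonneg a], ?_⟩
    rintro rfl
    simp only [mem_Icc] at hc
    exact hc ⟨by omega, by omega⟩
  have hone_le : ∀ N : ℕ, (1:ℝ) ≤ (N:ℝ)+1 := fun N => by
    nlinarith [Nat.cast_nonneg (α := ℝ) N]
  -- Piece 1
  have hb1 : |∑ Q ∈ P1, hterm a s Q|
      ≤ 3*((18*s*(Zc s (s/2)) + 9) * ((I:ℝ)+1)^(-s)) := by
    rw [hP1d, sum_product]
    have hper : ∀ c ∈ C1 \ A1, |∑ y ∈ A2 ×ˢ A3, hterm a s (c, y)|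
        ≤ (18*s*(Zc s (s/2)) + 9) * ((I:ℝ)+1)^(-s) := by
      intro c hc
      obtain ⟨h1, hsq, hc0⟩ := hw_of c I (by rw [← hA1]; exact (mem_sdiff.1 hc).2)
      have hfac : ∑ y ∈ A2 ×ˢ A3, hterm a s (c, y)
          = (-1:ℝ)^c * ∑ j ∈ Icc (-(J:ℤ)) (J:ℤ), ∑ k ∈ Icc (-(K:ℤ)) (K:ℤ),
              (-1:ℝ)^(j+k) * ((a^2+(c:ℝ)^2) + (j:ℝ)^2 + (k:ℝ)^2)^(-s) := by
        rw [sum_product, mul_sum, hA2, hA3]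
        apply sum_congr rfl; intro j _
        rw [mul_sum]
        apply sum_congr rfl; intro k _
        unfold hterm
        rw [if_neg (fun hh => hc0 hh.1),
          show c + j + k = c + (j+k) by ring, zpow_add₀ (by norm_num : (-1:ℝ) ≠ 0)]
        ring
      rw [hfac, abs_mul, abs_neg_one_zpow c, one_mul]
      calc |∑ j ∈ Icc (-(J:ℤ)) (J:ℤ), ∑ k ∈ Icc (-(K:ℤ)) (K:ℤ),
            (-1:ℝ)^(j+k) * ((a^2+(c:ℝ)^2) + (j:ℝ)^2 + (k:ℝ)^2)^(-s)|
          ≤ (18*s*(∑' mm : ℤ, ((1:ℝ)+(mm:ℝ)^2)^(-(1/2+s/2))) + 9) * (a^2+(c:ℝ)^2)^(-(s/2)) :=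
            sym2_bound (a^2+(c:ℝ)^2) s h1 hs J K
        _ ≤ (18*s*(Zc s (s/2)) + 9) * ((I:ℝ)+1)^(-s) := by
            unfold Zc
            apply mul_le_mul_of_nonneg_left _ (by positivity)
            exact offset s hs ((I:ℝ)+1) _ (hone_le I) hsq
    calc |∑ c ∈ C1 \ A1, ∑ y ∈ A2 ×ˢ A3, hterm a s (c, y)|
        ≤ ∑ c ∈ C1 \ A1, |∑ y ∈ A2 ×ˢ A3, hterm a s (c, y)| := abs_sum_le_sum_abs _ _
      _ ≤ ∑ _c ∈ C1 \ A1, (18*s*(Zc s (s/2)) + 9) * ((I:ℝ)+1)^(-s) := sum_le_sum hper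
      _ = ((C1 \ A1).card : ℝ) * ((18*s*(Zc s (s/2)) + 9) * ((I:ℝ)+1)^(-s)) := by
          rw [sum_const, nsmul_eq_mul]
      _ ≤ 3 * ((18*s*(Zc s (s/2)) + 9) * ((I:ℝ)+1)^(-s)) := by
          apply mul_le_mul_of_nonneg_right _ (by positivity)
          rw [hC1, hA1]
          exact card_ext I M1 (by omega) (by rw [← hA1, ← hC1]; exact hsub1)
  -- Piece 2
  have hb2 : |∑ Q ∈ P2, hterm a s Q|
      ≤ 3*((18*s*(Zc s (s/2))) * ((J:ℝ)+1)^(-s)) := by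
    rw [hP2d]
    simp only [sum_product]
    rw [sum_comm]
    have hper : ∀ c ∈ C2 \ A2, |∑ i ∈ C1, ∑ k ∈ A3, hterm a s (i, c, k)|
        ≤ (18*s*(Zc s (s/2))) * ((J:ℝ)+1)^(-s) := by
      intro c hc
      obtain ⟨h1, hsq, hc0⟩ := hw_of c J (by rw [← hA2]; exact (mem_sdiff.1 hc).2)
      have hfac : ∑ i ∈ C1, ∑ k ∈ A3, hterm a s (i, c, k)
          = (-1:ℝ)^c * ∑ i ∈ Icc (-(2*(M1:ℤ))) (2*(M1:ℤ)-1), ∑ k ∈ Icc (-(K:ℤ)) (K:ℤ),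
              (-1:ℝ)^(i+k) * ((a^2+(c:ℝ)^2) + (i:ℝ)^2 + (k:ℝ)^2)^(-s) := by
        rw [mul_sum, hC1, hA3]
        apply sum_congr rfl; intro i _
        rw [mul_sum]
        apply sum_congr rfl; intro k _
        unfold hterm
        rw [if_neg (fun hh => hc0 hh.2.1),
          show i + c + k = c + (i+k) by ring, zpow_add₀ (by norm_num : (-1:ℝ) ≠ 0),
          show a^2+(i:ℝ)^2+(c:ℝ)^2+(k:ℝ)^2 = a^2+(c:ℝ)^2+(i:ℝ)^2+(k:ℝ)^2 by ring]
        ring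
      rw [hfac, abs_mul, abs_neg_one_zpow c, one_mul]
      calc |∑ i ∈ Icc (-(2*(M1:ℤ))) (2*(M1:ℤ)-1), ∑ k ∈ Icc (-(K:ℤ)) (K:ℤ),
            (-1:ℝ)^(i+k) * ((a^2+(c:ℝ)^2) + (i:ℝ)^2 + (k:ℝ)^2)^(-s)|
          ≤ 18*s*(∑' mm : ℤ, ((1:ℝ)+(mm:ℝ)^2)^(-(1/2+s/2))) * (a^2+(c:ℝ)^2)^(-(s/2)) :=
            mixed_bound (a^2+(c:ℝ)^2) s h1 hs M1 K
        _ ≤ (18*s*(Zc s (s/2))) * ((J:ℝ)+1)^(-s) := by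
            unfold Zc
            apply mul_le_mul_of_nonneg_left _ (by positivity)
            exact offset s hs ((J:ℝ)+1) _ (hone_le J) hsq
    calc |∑ c ∈ C2 \ A2, ∑ i ∈ C1, ∑ k ∈ A3, hterm a s (i, c, k)|
        ≤ ∑ c ∈ C2 \ A2, |∑ i ∈ C1, ∑ k ∈ A3, hterm a s (i, c, k)| := abs_sum_le_sum_abs _ _
      _ ≤ ∑ _c ∈ C2 \ A2, (18*s*(Zc s (s/2))) * ((J:ℝ)+1)^(-s) := sum_le_sum hper
      _ = ((C2 \ A2).card : ℝ) * ((18*s*(Zc s (s/2))) * ((J:ℝ)+1)^(-s)) := by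
          rw [sum_const, nsmul_eq_mul]
      _ ≤ 3 * ((18*s*(Zc s (s/2))) * ((J:ℝ)+1)^(-s)) := by
          apply mul_le_mul_of_nonneg_right _ (by positivity)
          rw [hC2, hA2]
          exact card_ext J M2 (by omega) (by rw [← hA2, ← hC2]; exact hsub2)
  -- Piece 3
  have hb3 : |∑ Q ∈ P3, hterm a s Q|
      ≤ 3*((36*s*(s+1)*(Zc s (s/4))^2) * ((K:ℝ)+1)^(-s)) := by
    rw [hP3d]
    simp only [sum_product]
    rw [show (∑ i ∈ C1, ∑ j ∈ C2, ∑ c ∈ C3 \ A3, hterm a s (i, j, c))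
        = ∑ c ∈ C3 \ A3, ∑ i ∈ C1, ∑ j ∈ C2, hterm a s (i, j, c) from by
      calc ∑ i ∈ C1, ∑ j ∈ C2, ∑ c ∈ C3 \ A3, hterm a s (i, j, c)
          = ∑ i ∈ C1, ∑ c ∈ C3 \ A3, ∑ j ∈ C2, hterm a s (i, j, c) :=
            sum_congr rfl (fun i _ => sum_comm)
        _ = ∑ c ∈ C3 \ A3, ∑ i ∈ C1, ∑ j ∈ C2, hterm a s (i, j, c) := sum_comm]
    have hper : ∀ c ∈ C3 \ A3, |∑ i ∈ C1, ∑ j ∈ C2, hterm a s (i, j, c)|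
        ≤ (36*s*(s+1)*(Zc s (s/4))^2) * ((K:ℝ)+1)^(-s) := by
      intro c hc
      obtain ⟨h1, hsq, hc0⟩ := hw_of c K (by rw [← hA3]; exact (mem_sdiff.1 hc).2)
      have hfac : ∑ i ∈ C1, ∑ j ∈ C2, hterm a s (i, j, c)
          = (-1:ℝ)^c * ∑ i ∈ Icc (-(2*(M1:ℤ))) (2*(M1:ℤ)-1),
              ∑ j ∈ Icc (-(2*(M2:ℤ))) (2*(M2:ℤ)-1),
              (-1:ℝ)^(i+j) * ((a^2+(c:ℝ)^2) + (i:ℝ)^2 + (j:ℝ)^2)^(-s) := by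
        rw [mul_sum, hC1, hC2]
        apply sum_congr rfl; intro i _
        rw [mul_sum]
        apply sum_congr rfl; intro j _
        unfold hterm
        rw [if_neg (fun hh => hc0 hh.2.2),
          show i + j + c = c + (i+j) by ring, zpow_add₀ (by norm_num : (-1:ℝ) ≠ 0),
          show a^2+(i:ℝ)^2+(j:ℝ)^2+(c:ℝ)^2 = a^2+(c:ℝ)^2+(i:ℝ)^2+(j:ℝ)^2 by ring]
        ring
      rw [hfac, abs_mul, abs_neg_one_zpow c, one_mul]
      calc |∑ i ∈ Icc (-(2*(M1:ℤ))) (2*(M1:ℤ)-1), ∑ j ∈ Icc (-(2*(M2:ℤ))) (2*(M2:ℤ)-1),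
            (-1:ℝ)^(i+j) * ((a^2+(c:ℝ)^2) + (i:ℝ)^2 + (j:ℝ)^2)^(-s)|
          ≤ 36*s*(s+1)*(∑' mm : ℤ, ((1:ℝ)+(mm:ℝ)^2)^(-(1/2+s/4)))^2 * (a^2+(c:ℝ)^2)^(-(s/2)) :=
            covered2_bound (a^2+(c:ℝ)^2) s h1 hs M1 M2
        _ ≤ (36*s*(s+1)*(Zc s (s/4))^2) * ((K:ℝ)+1)^(-s) := by
            unfold Zc
            apply mul_le_mul_of_nonneg_left _ (by positivity)
            exact offset s hs ((K:ℝ)+1) _ (hone_le K) hsq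
    calc |∑ c ∈ C3 \ A3, ∑ i ∈ C1, ∑ j ∈ C2, hterm a s (i, j, c)|
        ≤ ∑ c ∈ C3 \ A3, |∑ i ∈ C1, ∑ j ∈ C2, hterm a s (i, j, c)| := abs_sum_le_sum_abs _ _
      _ ≤ ∑ _c ∈ C3 \ A3, (36*s*(s+1)*(Zc s (s/4))^2) * ((K:ℝ)+1)^(-s) := sum_le_sum hper
      _ = ((C3 \ A3).card : ℝ) * ((36*s*(s+1)*(Zc s (s/4))^2) * ((K:ℝ)+1)^(-s)) := by
          rw [sum_const, nsmul_eq_mul]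
      _ ≤ 3 * ((36*s*(s+1)*(Zc s (s/4))^2) * ((K:ℝ)+1)^(-s)) := by
          apply mul_le_mul_of_nonneg_right _ (by positivity)
          rw [hC3, hA3]
          exact card_ext K M3 (by omega) (by rw [← hA3, ← hC3]; exact hsub3)
  -- assemble
  have hxI : (0:ℝ) ≤ ((I:ℝ)+1)^(-s) := Real.rpow_nonneg (by positivity) _
  have hxJ : (0:ℝ) ≤ ((J:ℝ)+1)^(-s) := Real.rpow_nonneg (by positivity) _
  have hxK : (0:ℝ) ≤ ((K:ℝ)+1)^(-s) := Real.rpow_nonneg (by positivity) _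
  have t1 : (0:ℝ) ≤ 18*s*(Zc s (s/2)) :=
    mul_nonneg (by linarith : (0:ℝ) ≤ 18*s) hZ2nonneg
  have t2 : (0:ℝ) ≤ 36*s*(s+1)*(Zc s (s/4))^2 :=
    mul_nonneg (mul_nonneg (by linarith : (0:ℝ) ≤ 36*s) (by linarith : (0:ℝ) ≤ s+1))
      (sq_nonneg _)
  have hc1 : 3*((18*s*(Zc s (s/2)) + 9)) ≤ CT s := by unfold CT; linarith
  have hc2 : 3*((18*s*(Zc s (s/2)))) ≤ CT s := by unfold CT; linarith
  have hc3 : 3*((36*s*(s+1)*(Zc s (s/4))^2)) ≤ CT s := by unfold CT; linarith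
  have m1 : 3*((18*s*(Zc s (s/2)) + 9) * ((I:ℝ)+1)^(-s)) ≤ CT s * ((I:ℝ)+1)^(-s) := by
    calc 3*((18*s*(Zc s (s/2)) + 9) * ((I:ℝ)+1)^(-s))
        = (3*(18*s*(Zc s (s/2)) + 9)) * ((I:ℝ)+1)^(-s) := by ring
      _ ≤ CT s * ((I:ℝ)+1)^(-s) := mul_le_mul_of_nonneg_right hc1 hxI
  have m2 : 3*((18*s*(Zc s (s/2))) * ((J:ℝ)+1)^(-s)) ≤ CT s * ((J:ℝ)+1)^(-s) := by
    calc 3*((18*s*(Zc s (s/2))) * ((J:ℝ)+1)^(-s))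
        = (3*(18*s*(Zc s (s/2)))) * ((J:ℝ)+1)^(-s) := by ring
      _ ≤ CT s * ((J:ℝ)+1)^(-s) := mul_le_mul_of_nonneg_right hc2 hxJ
  have m3 : 3*((36*s*(s+1)*(Zc s (s/4))^2) * ((K:ℝ)+1)^(-s)) ≤ CT s * ((K:ℝ)+1)^(-s) := by
    calc 3*((36*s*(s+1)*(Zc s (s/4))^2) * ((K:ℝ)+1)^(-s))
        = (3*(36*s*(s+1)*(Zc s (s/4))^2)) * ((K:ℝ)+1)^(-s) := by ring
      _ ≤ CT s * ((K:ℝ)+1)^(-s) := mul_le_mul_of_nonneg_right hc3 hxK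
  calc |(∑ Q ∈ P1, hterm a s Q + ∑ Q ∈ P2, hterm a s Q) + ∑ Q ∈ P3, hterm a s Q|
      ≤ |∑ Q ∈ P1, hterm a s Q + ∑ Q ∈ P2, hterm a s Q| + |∑ Q ∈ P3, hterm a s Q| :=
        abs_add_le _ _
    _ ≤ (|∑ Q ∈ P1, hterm a s Q| + |∑ Q ∈ P2, hterm a s Q|) + |∑ Q ∈ P3, hterm a s Q| := by
        linarith [abs_add_le (∑ Q ∈ P1, hterm a s Q) (∑ Q ∈ P2, hterm a s Q)]
    _ ≤ CT s * (((I:ℝ)+1)^(-s) + ((J:ℝ)+1)^(-s) + ((K:ℝ)+1)^(-s)) := by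
        have e1 : |∑ Q ∈ P1, hterm a s Q| ≤ CT s * ((I:ℝ)+1)^(-s) := hb1.trans m1
        have e2 : |∑ Q ∈ P2, hterm a s Q| ≤ CT s * ((J:ℝ)+1)^(-s) := hb2.trans m2
        have e3 : |∑ Q ∈ P3, hterm a s Q| ≤ CT s * ((K:ℝ)+1)^(-s) := hb3.trans m3
        have expand : CT s * (((I:ℝ)+1)^(-s) + ((J:ℝ)+1)^(-s) + ((K:ℝ)+1)^(-s))
            = CT s * ((I:ℝ)+1)^(-s) + CT s * ((J:ℝ)+1)^(-s) + CT s * ((K:ℝ)+1)^(-s) := by ring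
        linarith




set_option maxHeartbeats 1000000 in
lemma summable_abs_Eblock (a s : ℝ) (hs : 0 < s) :
    Summable (fun P : ℤ×ℤ×ℤ => |Eblock a s P.1 P.2.1 P.2.2|) := by
  have ht : 1/2 < 1/2 + s/3 := by linarith
  have h1 := summable_one_add_sq (1/2+s/3) ht
  have h2 : Summable (fun P : ℤ×ℤ => ((1:ℝ)+(P.1:ℝ)^2)^(-(1/2+s/3))
      * ((1:ℝ)+(P.2:ℝ)^2)^(-(1/2+s/3))) :=
    h1.mul_of_nonneg h1 (fun m => by positivity) (fun m => by positivity)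
  have h3 : Summable (fun P : ℤ×(ℤ×ℤ) => ((1:ℝ)+(P.1:ℝ)^2)^(-(1/2+s/3)) *
      (((1:ℝ)+(P.2.1:ℝ)^2)^(-(1/2+s/3)) * ((1:ℝ)+(P.2.2:ℝ)^2)^(-(1/2+s/3)))) :=
    h1.mul_of_nonneg h2 (fun m => by positivity) (fun m => by positivity)
  have h4 := h3.mul_left (216 * 2^(s+3) * (s*(s+1)*(s+2)))
  set g0 : ℤ×ℤ×ℤ → ℝ := fun P => if P = ((0:ℤ),(0:ℤ),(0:ℤ)) then |Eblock a s 0 0 0| else 0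
    with hg0def
  have hg0 : Summable g0 :=
    summable_of_ne_finset_zero (s := ({((0:ℤ),(0:ℤ),(0:ℤ))} : Finset (ℤ×ℤ×ℤ)))
      (fun b hb => if_neg (by simpa using hb))
  apply Summable.of_nonneg_of_le (fun x => abs_nonneg _) _ (h4.add hg0)
  rintro ⟨m, n, p⟩
  by_cases h0 : ((m:ℤ), (n:ℤ), (p:ℤ)) = ((0:ℤ),(0:ℤ),(0:ℤ))
  · have hm : m = 0 := congrArg Prod.fst h0
    have hn : n = 0 := congrArg (fun Q : ℤ×ℤ×ℤ => Q.2.1) h0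
    have hp : p = 0 := congrArg (fun Q : ℤ×ℤ×ℤ => Q.2.2) h0
    subst hm; subst hn; subst hp
    have hposterm : (0:ℝ) ≤ (216 * 2^(s+3) * (s*(s+1)*(s+2))) * (((1:ℝ)+((0:ℤ):ℝ)^2)^(-(1/2+s/3)) *
        (((1:ℝ)+((0:ℤ):ℝ)^2)^(-(1/2+s/3)) * ((1:ℝ)+((0:ℤ):ℝ)^2)^(-(1/2+s/3)))) := by positivity
    have hgval : g0 ((0:ℤ),(0:ℤ),(0:ℤ)) = |Eblock a s 0 0 0| := by simp [hg0def]
    simp only [hgval]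
    linarith
  · have hne : ¬(m = 0 ∧ n = 0 ∧ p = 0) := by
      intro h
      exact h0 (by rw [h.1, h.2.1, h.2.2])
    have hb := Eblock_bound a s hs m n p hne
    have hgval : g0 ((m:ℤ), n, p) = 0 := if_neg h0
    calc |Eblock a s m n p| ≤ (216 * 2^(s+3) * (s*(s+1)*(s+2))) *
          (((1:ℝ)+(m:ℝ)^2) * (((1:ℝ)+(n:ℝ)^2) * ((1:ℝ)+(p:ℝ)^2)))^(-(1/2+s/3)) := hb
      _ = (216 * 2^(s+3) * (s*(s+1)*(s+2))) * (((1:ℝ)+(m:ℝ)^2)^(-(1/2+s/3)) *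
          (((1:ℝ)+(n:ℝ)^2)^(-(1/2+s/3)) * ((1:ℝ)+(p:ℝ)^2)^(-(1/2+s/3)))) := by
        rw [Real.mul_rpow (by positivity) (by positivity),
          Real.mul_rpow (by positivity) (by positivity)]
      _ ≤ (216 * 2^(s+3) * (s*(s+1)*(s+2))) * (((1:ℝ)+(m:ℝ)^2)^(-(1/2+s/3)) *
          (((1:ℝ)+(n:ℝ)^2)^(-(1/2+s/3)) * ((1:ℝ)+(p:ℝ)^2)^(-(1/2+s/3)))) + g0 ((m:ℤ), n, p) := by
        simp [hgval]

set_option maxHeartbeats 1000000 in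
theorem mainX (a s : ℝ) (hs : 0 < s) :
    Summable (fun p : ℤ × ℤ × ℤ => |Eblock a s p.1 p.2.1 p.2.2|) ∧
      ∃ L : ℝ,
        (∀ ε > (0 : ℝ), ∃ N₀ : ℕ, ∀ I J K : ℕ, N₀ ≤ I → N₀ ≤ J → N₀ ≤ K →
          |Spi a s I J K - L| < ε) ∧
        L = ∑' p : ℤ × ℤ × ℤ, Eblock a s p.1 p.2.1 p.2.2 := by
  have habs := summable_abs_Eblock a s hs
  have hsum : Summable (fun p : ℤ×ℤ×ℤ => Eblock a s p.1 p.2.1 p.2.2) := habs.of_abs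
  refine ⟨habs, ∑' p : ℤ×ℤ×ℤ, Eblock a s p.1 p.2.1 p.2.2, ?_, rfl⟩
  intro ε hε
  have hZ2 : 0 ≤ Zc s (s/2) := by unfold Zc; exact tsum_nonneg (fun i => by positivity)
  have hZ4 : 0 ≤ Zc s (s/4) := by unfold Zc; exact tsum_nonneg (fun i => by positivity)
  have t1 : (0:ℝ) ≤ 18*s*(Zc s (s/2)) := mul_nonneg (by linarith) hZ2
  have t2 : (0:ℝ) ≤ 36*s*(s+1)*(Zc s (s/4))^2 :=
    mul_nonneg (mul_nonneg (by linarith) (by linarith)) (sq_nonneg _)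
  have hCT : 0 ≤ CT s := by unfold CT; linarith
  have hCpos : (0:ℝ) < CT s + 1 := by linarith
  set c0 : ℝ := 6*(CT s + 1)/ε with hc0def
  have hc0 : 0 < c0 := by positivity
  obtain ⟨N₁, hN₁⟩ := exists_nat_gt (c0 ^ (s⁻¹))
  have hkey : ∀ n : ℕ, N₁ ≤ n → ((n:ℝ)+1)^(-s) < ε/(6*(CT s + 1)) := by
    intro n hn
    have hd : (0:ℝ) ≤ c0 ^ (s⁻¹) := Real.rpow_nonneg hc0.le _
    have hcast : (N₁:ℝ) ≤ (n:ℝ) := Nat.cast_le.2 hn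
    have hlt : c0 ^ (s⁻¹) < (n:ℝ)+1 := by linarith
    have h2 : c0 < ((n:ℝ)+1)^s := by
      have h := Real.rpow_lt_rpow hd hlt hs
      rwa [← Real.rpow_mul hc0.le, inv_mul_cancel₀ hs.ne', Real.rpow_one] at h
    have h3 : ((n:ℝ)+1)^(-s) = (((n:ℝ)+1)^s)⁻¹ := by
      rw [Real.rpow_neg (by positivity)]
    rw [h3, show ε/(6*(CT s + 1)) = c0⁻¹ from by rw [hc0def]; field_simp]
    exact inv_strictAnti₀ hc0 h2
  have htend := Metric.tendsto_nhds.mp hsum.hasSum (ε/2) (by linarith)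
  rw [SummationFilter.unconditional_filter, Filter.eventually_atTop] at htend
  obtain ⟨F₀, hF₀⟩ := htend
  set R : ℕ := F₀.sup (fun P : ℤ×ℤ×ℤ => P.1.natAbs ⊔ (P.2.1.natAbs ⊔ P.2.2.natAbs)) + 1 with hR
  refine ⟨max N₁ (2*R), ?_⟩
  intro I J K hI hJ hK
  have hNI : N₁ ≤ I := le_trans (le_max_left _ _) hI
  have hNJ : N₁ ≤ J := le_trans (le_max_left _ _) hJ
  have hNK : N₁ ≤ K := le_trans (le_max_left _ _) hK
  have hRI : 2*R ≤ I := le_trans (le_max_right _ _) hI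
  have hRJ : 2*R ≤ J := le_trans (le_max_right _ _) hJ
  have hRK : 2*R ≤ K := le_trans (le_max_right _ _) hK
  set B := (Icc (-((I/2+1:ℕ):ℤ)) (((I/2+1:ℕ):ℤ)-1)) ×ˢ ((Icc (-((J/2+1:ℕ):ℤ)) (((J/2+1:ℕ):ℤ)-1))
      ×ˢ (Icc (-((K/2+1:ℕ):ℤ)) (((K/2+1:ℕ):ℤ)-1))) with hBdef
  have hF₀B : F₀ ≤ B := by
    intro P hP
    have h := Finset.le_sup
      (f := fun P : ℤ×ℤ×ℤ => P.1.natAbs ⊔ (P.2.1.natAbs ⊔ P.2.2.natAbs)) hP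
    have h1 : P.1.natAbs ≤ F₀.sup (fun P : ℤ×ℤ×ℤ => P.1.natAbs ⊔ (P.2.1.natAbs ⊔ P.2.2.natAbs)) :=
      le_trans (le_max_left _ _) h
    have h2 : P.2.1.natAbs
        ≤ F₀.sup (fun P : ℤ×ℤ×ℤ => P.1.natAbs ⊔ (P.2.1.natAbs ⊔ P.2.2.natAbs)) :=
      le_trans (le_trans (le_max_left _ _) (le_max_right _ _)) h
    have h3 : P.2.2.natAbs
        ≤ F₀.sup (fun P : ℤ×ℤ×ℤ => P.1.natAbs ⊔ (P.2.1.natAbs ⊔ P.2.2.natAbs)) :=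
      le_trans (le_trans (le_max_right _ _) (le_max_right _ _)) h
    have hReq := hR
    simp only [hBdef, mem_product, mem_Icc]
    refine ⟨⟨?_, ?_⟩, ⟨?_, ?_⟩, ?_, ?_⟩ <;> omega
  have hblock := hF₀ B hF₀B
  rw [Real.dist_eq] at hblock
  have hdec := Spi_decomp a s hs I J K
  have hxI : (0:ℝ) ≤ ((I:ℝ)+1)^(-s) := Real.rpow_nonneg (by positivity) _
  have hxJ : (0:ℝ) ≤ ((J:ℝ)+1)^(-s) := Real.rpow_nonneg (by positivity) _
  have hxK : (0:ℝ) ≤ ((K:ℝ)+1)^(-s) := Real.rpow_nonneg (by positivity) _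
  have hsmall : CT s * (((I:ℝ)+1)^(-s) + ((J:ℝ)+1)^(-s) + ((K:ℝ)+1)^(-s)) < ε/2 := by
    have b1 := hkey I hNI
    have b2 := hkey J hNJ
    have b3 := hkey K hNK
    calc CT s * (((I:ℝ)+1)^(-s) + ((J:ℝ)+1)^(-s) + ((K:ℝ)+1)^(-s))
        ≤ (CT s + 1) * (((I:ℝ)+1)^(-s) + ((J:ℝ)+1)^(-s) + ((K:ℝ)+1)^(-s)) := by
          apply mul_le_mul_of_nonneg_right (by linarith) (by linarith)
      _ < (CT s + 1) * (3*(ε/(6*(CT s + 1)))) := by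
          apply mul_lt_mul_of_pos_left _ hCpos
          linarith
      _ = ε/2 := by field_simp; ring
  calc |Spi a s I J K - ∑' p : ℤ×ℤ×ℤ, Eblock a s p.1 p.2.1 p.2.2|
      ≤ |Spi a s I J K - ∑ P ∈ B, Eblock a s P.1 P.2.1 P.2.2|
        + |∑ P ∈ B, Eblock a s P.1 P.2.1 P.2.2 - ∑' p : ℤ×ℤ×ℤ, Eblock a s p.1 p.2.1 p.2.2| :=
        abs_sub_le _ _ _
    _ < ε/2 + ε/2 := add_lt_add_of_le_of_lt (le_trans hdec hsmall.le) hblock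
    _ = ε := add_halves ε


end Mad

/-- For `s > 0` the family `(E'_{I,J,K}(a,s))_{(I,J,K) ∈ ℤ³}` is absolutely summable, the
limit of `S_{Π_{I,J,K}}(a,s)` by expanding rectangles exists, and it equals
`∑_{(I,J,K) ∈ ℤ³} E'_{I,J,K}(a,s)`. -/
theorem madelung_expanding_rectangles (a s : ℝ) (hs : 0 < s) :
    Summable (fun p : ℤ × ℤ × ℤ => |Eblock a s p.1 p.2.1 p.2.2|) ∧
      ∃ L : ℝ,
        (∀ ε > (0 : ℝ), ∃ N₀ : ℕ, ∀ I J K : ℕ, N₀ ≤ I → N₀ ≤ J → N₀ ≤ K →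
          |Spi a s I J K - L| < ε) ∧
        L = ∑' p : ℤ × ℤ × ℤ, Eblock a s p.1 p.2.1 p.2.2 := by
  exact Mad.mainX a s hs
end

section
/- There is a constant c > 0 such that the set { n ∈ ℕ : r₃(n) ≥ c √n } is infinite; that is, r₃(n) ≥ c √n holds for infinitely many n. -/
open Finset

/-- `r3 n` is the number of triples `(i,j,k) ∈ ℤ³` with `i² + j² + k² = n`. -/
noncomputable def r3 (n : ℕ) : ℕ :=
  Set.ncard {p : ℤ × ℤ × ℤ | p.1 ^ 2 + p.2.1 ^ 2 + p.2.2 ^ 2 = (n : ℤ)}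

/-- Finset of representations of `n` as a sum of three squares. -/
noncomputable def F3 (n : ℕ) : Finset (ℤ × ℤ × ℤ) :=
  (Finset.Icc (-(n:ℤ)) n ×ˢ Finset.Icc (-(n:ℤ)) n ×ˢ Finset.Icc (-(n:ℤ)) n).filter
    (fun p => p.1 ^ 2 + p.2.1 ^ 2 + p.2.2 ^ 2 = (n : ℤ))

lemma coord_bound {x : ℤ} {n : ℕ} (h : x ^ 2 ≤ (n : ℤ)) : -(n:ℤ) ≤ x ∧ x ≤ n := by
  have hn : (n : ℤ) ≤ (n : ℤ) ^ 2 := by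
    exact_mod_cast Nat.le_self_pow two_ne_zero n
  exact abs_le_of_sq_le_sq' (h.trans hn) (by positivity)

lemma r3_eq (n : ℕ) : r3 n = (F3 n).card := by
  rw [r3, ← Set.ncard_coe_finset]
  congr 1
  ext p
  simp only [F3, coe_filter, mem_product, Finset.mem_Icc, Set.mem_setOf_eq]
  constructor
  · intro h
    have h1 : p.1 ^ 2 ≤ (n : ℤ) := by nlinarith [sq_nonneg p.2.1, sq_nonneg p.2.2]
    have h2 : p.2.1 ^ 2 ≤ (n : ℤ) := by nlinarith [sq_nonneg p.1, sq_nonneg p.2.2]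
    have h3 : p.2.2 ^ 2 ≤ (n : ℤ) := by nlinarith [sq_nonneg p.1, sq_nonneg p.2.1]
    exact ⟨⟨coord_bound h1, coord_bound h2, coord_bound h3⟩, h⟩
  · exact fun h => h.2

lemma sum_bound (N : ℕ) :
    (Nat.sqrt (N / 3) + 1) ^ 3 ≤ ∑ n ∈ Finset.range (N + 1), (F3 n).card := by
  set m := Nat.sqrt (N / 3) with hm
  have h3m : 3 * m ^ 2 ≤ N := by
    have h := Nat.sqrt_le' (N / 3)
    rw [← hm] at h
    omega
  have hsub : (Finset.Icc (0:ℤ) m ×ˢ Finset.Icc (0:ℤ) m ×ˢ Finset.Icc (0:ℤ) m) ⊆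
      (Finset.range (N + 1)).biUnion F3 := by
    intro p hp
    simp only [mem_product, Finset.mem_Icc] at hp
    obtain ⟨⟨h1, h2⟩, ⟨h3, h4⟩, h5, h6⟩ := hp
    set s : ℤ := p.1 ^ 2 + p.2.1 ^ 2 + p.2.2 ^ 2 with hs
    have hs0 : 0 ≤ s := by positivity
    have hsN : s ≤ (N : ℤ) := by
      have : (3 : ℤ) * (m : ℤ) ^ 2 ≤ (N : ℤ) := by exact_mod_cast h3m
      nlinarith
    have hcast : ((s.toNat : ℤ)) = s := Int.toNat_of_nonneg hs0
    refine Finset.mem_biUnion.2 ⟨s.toNat, ?_, ?_⟩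
    · simp only [Finset.mem_range]
      omega
    · simp only [F3, mem_filter, mem_product, Finset.mem_Icc]
      have b1 : p.1 ^ 2 ≤ (s.toNat : ℤ) := by rw [hcast]; nlinarith [sq_nonneg p.2.1, sq_nonneg p.2.2]
      have b2 : p.2.1 ^ 2 ≤ (s.toNat : ℤ) := by rw [hcast]; nlinarith [sq_nonneg p.1, sq_nonneg p.2.2]
      have b3 : p.2.2 ^ 2 ≤ (s.toNat : ℤ) := by rw [hcast]; nlinarith [sq_nonneg p.1, sq_nonneg p.2.1]
      exact ⟨⟨coord_bound b1, coord_bound b2, coord_bound b3⟩, by rw [hcast]⟩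
  have hcard : ((Finset.Icc (0:ℤ) m ×ˢ Finset.Icc (0:ℤ) m ×ˢ Finset.Icc (0:ℤ) m)).card
      = (m + 1) ^ 3 := by
    simp only [Finset.card_product, Int.card_Icc]
    have : ((m : ℤ) + 1 - 0).toNat = m + 1 := by omega
    rw [this]; ring
  calc (m + 1) ^ 3 = _ := hcard.symm
    _ ≤ ((Finset.range (N + 1)).biUnion F3).card := Finset.card_le_card hsub
    _ ≤ ∑ n ∈ Finset.range (N + 1), (F3 n).card := Finset.card_biUnion_le

lemma key (N : ℕ) (hN : 1 ≤ N) :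
    ∃ n ≤ N, Real.sqrt N / 11 ≤ (r3 n : ℝ) := by
  set m := Nat.sqrt (N / 3) with hm
  set s : ℝ := Real.sqrt N with hsdef
  have hs2 : s ^ 2 = N := Real.sq_sqrt (by positivity)
  have hs1 : 1 ≤ s := by
    rw [hsdef]
    rw [show (1:ℝ) = Real.sqrt 1 by simp]
    exact Real.sqrt_le_sqrt (by exact_mod_cast hN)
  have hNlt : N < 3 * (m + 1) ^ 2 := by
    have h := Nat.lt_succ_sqrt' (N / 3)
    simp only [Nat.succ_eq_add_one, ← hm] at h
    omega
  have hNlt' : s ^ 2 ≤ 3 * ((m : ℝ) + 1) ^ 2 := by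
    rw [hs2]
    exact_mod_cast hNlt.le
  have ht1 : (1 : ℝ) ≤ (m : ℝ) + 1 := le_add_of_nonneg_left (Nat.cast_nonneg m)
  -- the pigeonhole
  have hsum : (((m + 1) ^ 3 : ℕ) : ℝ) ≤ ∑ n ∈ Finset.range (N + 1), ((F3 n).card : ℝ) := by
    rw [← Nat.cast_sum]
    exact_mod_cast sum_bound N
  have hconst : ∑ _n ∈ Finset.range (N + 1), (s / 11) ≤
      ∑ n ∈ Finset.range (N + 1), ((F3 n).card : ℝ) := by
    refine le_trans ?_ hsum
    rw [Finset.sum_const, Finset.card_range]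
    push_cast
    have hN1 : ((N : ℝ) + 1) ≤ 2 * s ^ 2 := by
      rw [hs2]; push_cast; nlinarith [hN, hs2, hs1]
    have key : (↑N + 1) * (s / 11) ≤ ((m:ℝ) + 1) ^ 3 := by
      have hNs : (N : ℝ) = s ^ 2 := hs2.symm
      rw [hNs, show (s^2 + 1) * (s / 11) = ((s^2+1)*s)/11 by ring,
        div_le_iff₀ (by norm_num : (0:ℝ) < 11)]
      set t : ℝ := (m : ℝ) + 1 with htdef
      have h : s^2 ≤ 3*t^2 := hNlt'
      nlinarith [mul_nonneg (by linarith : (0:ℝ) ≤ s) (by linarith : (0:ℝ) ≤ 3*t^2 - s^2),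
        mul_nonneg (by linarith : (0:ℝ) ≤ t) (by linarith : (0:ℝ) ≤ 3*t^2 - s^2),
        mul_nonneg (by linarith : (0:ℝ) ≤ t) (sq_nonneg (s - t)),
        mul_nonneg (by linarith : (0:ℝ) ≤ s - 1) (by linarith : (0:ℝ) ≤ s),
        mul_nonneg (by linarith : (0:ℝ) ≤ t - 1) (mul_nonneg (by linarith : (0:ℝ) ≤ t) (by linarith : (0:ℝ) ≤ t))]
    calc (↑N + 1) • (s / 11) = (↑N + 1) * (s / 11) := by rw [nsmul_eq_mul]; push_cast; ring
      _ ≤ ((m:ℝ) + 1) ^ 3 := key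
  obtain ⟨n, hn, hle⟩ := Finset.exists_le_of_sum_le (Finset.nonempty_range_iff.2 (by omega)) hconst
  exact ⟨n, by simpa using Nat.lt_succ_iff.mp (Finset.mem_range.mp hn), by rw [r3_eq]; exact hle⟩

/-- There is `c > 0` such that `r₃(n) ≥ c √n` for infinitely many `n`. -/
theorem r3_lower_bound_infinitely_often :
    ∃ c > (0 : ℝ), {n : ℕ | c * Real.sqrt (n : ℝ) ≤ (r3 n : ℝ)}.Infinite := by
  refine ⟨1 / 11, by norm_num, ?_⟩
  set S := {n : ℕ | (1:ℝ)/11 * Real.sqrt (n : ℝ) ≤ (r3 n : ℝ)} with hS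
  intro hfin
  obtain ⟨M, hM⟩ : ∃ M : ℕ, ∀ n ∈ S, r3 n ≤ M := by
    obtain ⟨M, hM⟩ := (hfin.image r3).bddAbove
    exact ⟨M, fun n hn => hM ⟨n, hn, rfl⟩⟩
  set N : ℕ := (11 * (M + 1)) ^ 2 with hN
  have hN1 : 1 ≤ N := Nat.one_le_pow _ _ (by omega)
  obtain ⟨n, hnN, hle⟩ := key N hN1
  have hsqrtN : Real.sqrt N = 11 * (M + 1) := by
    rw [hN]
    push_cast
    exact Real.sqrt_sq (by positivity)
  have hnS : n ∈ S := by
    have hmono : Real.sqrt n ≤ Real.sqrt N := Real.sqrt_le_sqrt (by exact_mod_cast hnN)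
    simp only [hS, Set.mem_setOf_eq]
    calc (1:ℝ)/11 * Real.sqrt n ≤ (1:ℝ)/11 * Real.sqrt N := by nlinarith [Real.sqrt_nonneg (n:ℝ)]
      _ = Real.sqrt N / 11 := by ring
      _ ≤ (r3 n : ℝ) := hle
  have hbig : (M : ℝ) + 1 ≤ (r3 n : ℝ) := by
    rw [hsqrtN] at hle
    calc (M:ℝ) + 1 = 11 * ((M:ℝ)+1) / 11 := by ring
      _ ≤ (r3 n : ℝ) := by push_cast at hle ⊢; linarith
  have := hM n hnS
  have : (r3 n : ℝ) ≤ M := by exact_mod_cast this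
  linarith
end

section
/- Let a ∈ ℝ and 0 < s ≤ 1/2. Then the sequence of terms ( (-1)^n r₃(n)/(a² + n)^s )_{n≥1} does not converge to 0, and consequently the sequence of partial sums N ↦ ∑_{n=1}^{N} (-1)^n r₃(n)/(a² + n)^s does not converge; i.e. the series for the Madelung constant summed by expanding spheres diverges for s ≤ 1/2. -/
open scoped BigOperators

private noncomputable def boxF (m : ℕ) : Finset (ℤ × ℤ × ℤ) :=
  Finset.Icc (-(m:ℤ)) m ×ˢ (Finset.Icc (-(m:ℤ)) m ×ˢ Finset.Icc (-(m:ℤ)) m)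

lemma boxF_card (m : ℕ) : (boxF m).card = (2*m+1)^3 := by
  simp only [boxF, Finset.card_product, Int.card_Icc]
  have : ((m:ℤ) + 1 - (-(m:ℤ))).toNat = 2*m+1 := by omega
  rw [this]; ring

lemma mem_boxF {m : ℕ} {p : ℤ × ℤ × ℤ} :
    p ∈ boxF m ↔ (-(m:ℤ) ≤ p.1 ∧ p.1 ≤ m) ∧ (-(m:ℤ) ≤ p.2.1 ∧ p.2.1 ≤ m) ∧
      (-(m:ℤ) ≤ p.2.2 ∧ p.2.2 ≤ m) := by
  simp [boxF, Finset.mem_Icc, and_assoc]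

lemma sphere_subset (n : ℕ) :
    {p : ℤ × ℤ × ℤ | p.1 ^ 2 + p.2.1 ^ 2 + p.2.2 ^ 2 = (n : ℤ)} ⊆ ↑(boxF n) := by
  rintro ⟨i, j, k⟩ h
  simp only [Set.mem_setOf_eq] at h
  have key : ∀ x : ℤ, x ^ 2 ≤ (n:ℤ) → -(n:ℤ) ≤ x ∧ x ≤ n := by
    intro x hx
    constructor
    · nlinarith [Int.le_self_sq (-x)]
    · nlinarith [Int.le_self_sq x]
  have hi := key i (by nlinarith [sq_nonneg j, sq_nonneg k])
  have hj := key j (by nlinarith [sq_nonneg i, sq_nonneg k])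
  have hk := key k (by nlinarith [sq_nonneg i, sq_nonneg j])
  exact Finset.mem_coe.mpr (mem_boxF.mpr ⟨hi, hj, hk⟩)

lemma sphere_finite (n : ℕ) :
    {p : ℤ × ℤ × ℤ | p.1 ^ 2 + p.2.1 ^ 2 + p.2.2 ^ 2 = (n : ℤ)}.Finite :=
  Set.Finite.subset (boxF n).finite_toSet (sphere_subset n)

lemma r3_le (n : ℕ) : r3 n ≤ (2*n+1)^3 := by
  rw [r3, ← boxF_card n, ← Set.ncard_coe_finset]
  exact Set.ncard_le_ncard (sphere_subset n) (boxF n).finite_toSet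

lemma r3_zero : r3 0 = 1 := by
  have : {p : ℤ × ℤ × ℤ | p.1 ^ 2 + p.2.1 ^ 2 + p.2.2 ^ 2 = ((0:ℕ) : ℤ)}
      = {((0:ℤ), (0:ℤ), (0:ℤ))} := by
    ext ⟨i, j, k⟩
    simp only [Set.mem_setOf_eq, Set.mem_singleton_iff, Prod.mk.injEq, Nat.cast_zero]
    constructor
    · intro h
      refine ⟨?_, ?_, ?_⟩ <;> nlinarith [sq_nonneg i, sq_nonneg j, sq_nonneg k]
    · rintro ⟨rfl, rfl, rfl⟩; ring
  rw [r3, this, Set.ncard_singleton]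

lemma sum_r3 (m : ℕ) : (2*m+1)^3 ≤ ∑ n ∈ Finset.range (3*m^2+1), r3 n := by
  classical
  have hmap : ∀ p ∈ boxF m,
      (p.1 ^ 2 + p.2.1 ^ 2 + p.2.2 ^ 2).toNat ∈ Finset.range (3*m^2+1) := by
    rintro ⟨i, j, k⟩ hp
    obtain ⟨⟨hi1, hi2⟩, ⟨hj1, hj2⟩, ⟨hk1, hk2⟩⟩ := mem_boxF.mp hp
    have h0 : (0:ℤ) ≤ i ^ 2 + j ^ 2 + k ^ 2 := by positivity
    have h2 : i ^ 2 + j ^ 2 + k ^ 2 ≤ ((3*m^2 : ℕ) : ℤ) := by push_cast; nlinarith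
    simp only [Finset.mem_range]
    omega
  have hcard := Finset.card_eq_sum_card_fiberwise hmap
  rw [boxF_card] at hcard
  rw [hcard]
  refine Finset.sum_le_sum fun n _ => ?_
  have hsub : ↑((boxF m).filter
      (fun p : ℤ × ℤ × ℤ => (p.1 ^ 2 + p.2.1 ^ 2 + p.2.2 ^ 2).toNat = n))
      ⊆ {p : ℤ × ℤ × ℤ | p.1 ^ 2 + p.2.1 ^ 2 + p.2.2 ^ 2 = (n : ℤ)} := by
    rintro ⟨i, j, k⟩ hp
    simp only [Finset.coe_filter, Set.mem_setOf_eq] at hp ⊢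
    have h0 : 0 ≤ i ^ 2 + j ^ 2 + k ^ 2 := by positivity
    omega
  rw [r3, ← Set.ncard_coe_finset]
  exact Set.ncard_le_ncard hsub (sphere_finite n)

lemma exists_big (m : ℕ) (hm : 1 ≤ m) :
    ∃ n ∈ Finset.Icc 1 (3*m^2), 2*m ≤ r3 n := by
  by_contra h
  push_neg at h
  have hb : ∑ n ∈ Finset.Icc 1 (3*m^2), r3 n < (3*m^2) * (2*m) := by
    have hne : (Finset.Icc 1 (3*m^2)).Nonempty :=
      ⟨1, by simp only [Finset.mem_Icc]; exact ⟨le_refl 1, by nlinarith⟩⟩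
    calc ∑ n ∈ Finset.Icc 1 (3*m^2), r3 n
        < ∑ n ∈ Finset.Icc 1 (3*m^2), 2*m := Finset.sum_lt_sum_of_nonempty hne h
      _ = (3*m^2) * (2*m) := by
          rw [Finset.sum_const, smul_eq_mul, Nat.card_Icc, Nat.add_sub_cancel]
  have hsplit : ∑ n ∈ Finset.range (3*m^2+1), r3 n
      = r3 0 + ∑ n ∈ Finset.Icc 1 (3*m^2), r3 n := by
    have : Finset.range (3*m^2+1) = insert 0 (Finset.Icc 1 (3*m^2)) := by
      ext x; simp [Finset.mem_range, Finset.mem_Icc]; omega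
    rw [this, Finset.sum_insert (by simp)]
  have hsum := sum_r3 m
  rw [hsplit, r3_zero] at hsum
  nlinarith [hsum, hb, sq_nonneg m, hm]

/-- For `0 < s ≤ 1/2` the terms `(-1)^n r₃(n)/(a²+n)^s` do not tend to `0`, and the partial
sums `N ↦ ∑_{n=1}^N (-1)^n r₃(n)/(a²+n)^s` do not converge: the series for the Madelung
constant summed by expanding spheres diverges for `s ≤ 1/2`. -/
theorem madelung_spheres_diverges (a s : ℝ) (hs0 : 0 < s) (hs : s ≤ 1 / 2) :
    ¬ Filter.Tendsto
        (fun n : ℕ => (-1 : ℝ) ^ n * (r3 n : ℝ) / (a ^ 2 + (n : ℝ)) ^ s)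
        Filter.atTop (nhds 0) ∧
      ∀ L : ℝ, ¬ Filter.Tendsto
        (fun N : ℕ => ∑ n ∈ Finset.Icc 1 N, (-1 : ℝ) ^ n * (r3 n : ℝ) / (a ^ 2 + (n : ℝ)) ^ s)
        Filter.atTop (nhds L) := by
  set f : ℕ → ℝ := fun n => (-1 : ℝ) ^ n * (r3 n : ℝ) / (a ^ 2 + (n : ℝ)) ^ s with hf
  have key : ¬ Filter.Tendsto f Filter.atTop (nhds 0) := by
    intro h
    obtain ⟨M, hM⟩ := (Metric.tendsto_atTop.mp h) 1 one_pos
    -- choose m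
    set m : ℕ := (2*M+1)^3 + ⌈|a|⌉₊ + 1 with hm
    clear_value m
    obtain ⟨n, hn, hbig⟩ := exists_big m (by omega)
    rw [Finset.mem_Icc] at hn
    obtain ⟨hn1, hn2⟩ := hn
    -- n ≥ M
    have hnM : M ≤ n := by
      by_contra hc
      push_neg at hc
      have h1 : (2*n+1)^3 ≤ (2*M+1)^3 := Nat.pow_le_pow_left (by omega) 3
      have h2 := r3_le n
      have h3 : 2*m ≤ (2*M+1)^3 := le_trans (le_trans hbig h2) h1
      omega
    -- bound a² ≤ m²
    have ham : |a| ≤ (m : ℝ) := by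
      calc |a| ≤ (⌈|a|⌉₊ : ℝ) := Nat.le_ceil _
        _ ≤ (m : ℝ) := by
            have hcm : ⌈|a|⌉₊ ≤ m := hm ▸ (Nat.le_add_left _ _).trans (Nat.le_succ _)
            exact_mod_cast Nat.cast_le.mpr hcm
    have ha2 : a ^ 2 ≤ (m : ℝ)^2 := by
      rw [← sq_abs]
      exact pow_le_pow_left₀ (abs_nonneg a) ham 2
    have hn1R : (1:ℝ) ≤ (n:ℝ) := by exact_mod_cast hn1
    have hbase1 : (1:ℝ) ≤ a ^ 2 + (n:ℝ) := by nlinarith [sq_nonneg a]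
    have hden_pos : (0:ℝ) < (a ^ 2 + (n:ℝ)) ^ s := Real.rpow_pos_of_pos (by linarith) s
    -- denominator bound
    have hd1 : (a ^ 2 + (n:ℝ)) ^ s ≤ (a ^ 2 + (n:ℝ)) ^ ((1:ℝ)/2) :=
      Real.rpow_le_rpow_of_exponent_le hbase1 hs
    have hbase2 : a ^ 2 + (n:ℝ) ≤ ((2*m : ℕ) : ℝ) ^ (2:ℕ) := by
      have hn2R : (n:ℝ) ≤ 3 * (m:ℝ)^2 := by
        have : (n:ℝ) ≤ ((3*m^2 : ℕ) : ℝ) := Nat.cast_le.mpr hn2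
        push_cast at this
        linarith
      have h2m : ((2*m : ℕ) : ℝ) = 2 * (m:ℝ) := by push_cast; ring
      rw [h2m]
      nlinarith
    have hd2 : (a ^ 2 + (n:ℝ)) ^ ((1:ℝ)/2) ≤ (((2*m : ℕ) : ℝ) ^ (2:ℕ)) ^ ((1:ℝ)/2) :=
      Real.rpow_le_rpow (by linarith) hbase2 (by norm_num)
    have hd3 : (((2*m : ℕ) : ℝ) ^ (2:ℕ)) ^ ((1:ℝ)/2) = ((2*m : ℕ) : ℝ) := by
      rw [← Real.rpow_natCast ((2*m : ℕ) : ℝ) 2, ← Real.rpow_mul (by positivity)]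
      norm_num
    have hden_le : (a ^ 2 + (n:ℝ)) ^ s ≤ ((2*m : ℕ) : ℝ) := by
      rw [← hd3]; exact le_trans hd1 hd2
    have hr3 : ((2*m : ℕ) : ℝ) ≤ (r3 n : ℝ) := by exact_mod_cast hbig
    -- |f n| ≥ 1
    have habs : (1:ℝ) ≤ |f n| := by
      have : |f n| = (r3 n : ℝ) / (a ^ 2 + (n:ℝ)) ^ s := by
        rw [hf]
        simp only [abs_div, abs_mul, abs_pow, abs_neg, abs_one, one_pow, one_mul,
          Nat.abs_cast, abs_of_pos hden_pos]
      rw [this, le_div_iff₀ hden_pos]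
      linarith
    have := hM n hnM
    rw [Real.dist_eq, sub_zero] at this
    linarith
  refine ⟨key, fun L hL => ?_⟩
  have h1 : Filter.Tendsto (fun N : ℕ => (∑ n ∈ Finset.Icc 1 (N+1), f n) - ∑ n ∈ Finset.Icc 1 N, f n)
      Filter.atTop (nhds (L - L)) := (hL.comp (Filter.tendsto_add_atTop_nat 1)).sub hL
  rw [sub_self] at h1
  have h2 : (fun N : ℕ => (∑ n ∈ Finset.Icc 1 (N+1), f n) - ∑ n ∈ Finset.Icc 1 N, f n)
      = fun N : ℕ => f (N+1) := by
    funext N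
    rw [Finset.sum_Icc_succ_top (Nat.succ_le_succ (Nat.zero_le N))]
    ring
  rw [h2] at h1
  exact key ((Filter.tendsto_add_atTop_iff_nat 1).mp h1)
end

section
/- Let 0 < s < 1 and let x ∈ ℝ³ with x ∉ 2πℤ³. Then the regularized periodization of the power kernel converges by expanding rectangles: there exists L ∈ ℝ such that for every ε > 0 there is N₀ ∈ ℕ with | L - ∑_{(n,k,l) ∈ Π_{N,M,K} ∩ ℤ³, (n,k,l) ≠ (0,0,0)} ( |x - 2π(n,k,l)|^{2s-3} - |2π(n,k,l)|^{2s-3} ) | < ε whenever N, M, K ≥ N₀, where Π_{N,M,K} = [-N,N] × [-M,M] × [-K,K]. -/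
open scoped BigOperators Real

lemma rpow_mvt (b : ℝ) {u v : ℝ} (hu : 0 < u) (hv : 0 < v) :
    ∃ c : ℝ, 0 < c ∧ min u v ≤ c ∧ c ≤ max u v ∧
      v ^ b - u ^ b = b * c ^ (b - 1) * (v - u) := by
  have key : ∀ p q : ℝ, 0 < p → 0 < q → p < q →
      ∃ c : ℝ, 0 < c ∧ p ≤ c ∧ c ≤ q ∧
        q ^ b - p ^ b = b * c ^ (b - 1) * (q - p) := by
    intro p q hp hq hpq
    have hcont : ContinuousOn (fun y : ℝ => y ^ b) (Set.Icc p q) := by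
      intro y hy
      have hy0 : y ≠ 0 := ne_of_gt (lt_of_lt_of_le hp hy.1)
      exact (Real.continuousAt_rpow_const y b (Or.inl hy0)).continuousWithinAt
    have hderiv : ∀ y ∈ Set.Ioo p q, HasDerivAt (fun y : ℝ => y ^ b) (b * y ^ (b - 1)) y := by
      intro y hy
      have hy0 : y ≠ 0 := ne_of_gt (hp.trans hy.1)
      exact Real.hasDerivAt_rpow_const (Or.inl hy0)
    obtain ⟨c, hc, hc'⟩ := exists_hasDerivAt_eq_slope (fun y : ℝ => y ^ b)
      (fun y => b * y ^ (b - 1)) hpq hcont hderiv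
    refine ⟨c, by linarith [hc.1], hc.1.le, hc.2.le, ?_⟩
    have hne : q - p ≠ 0 := by linarith [hpq]
    field_simp at hc'
    linarith [hc']
  rcases lt_trichotomy u v with h | h | h
  · obtain ⟨c, h0, h1, h2, h3⟩ := key u v hu hv h
    exact ⟨c, h0, by simp [min_le_iff]; left; exact h1, by simp [le_max_iff]; right; exact h2, h3⟩
  · exact ⟨u, hu, min_le_left _ _, le_max_left _ _, by rw [h]; ring⟩
  · obtain ⟨c, h0, h1, h2, h3⟩ := key v u hv hu h
    refine ⟨c, h0, by simp [min_le_iff]; right; exact h1, by simp [le_max_iff]; left; exact h2, ?_⟩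
    linarith [h3]

lemma rpow_taylor (b : ℝ) (hb : b ≤ 2) {u v : ℝ} (hu : 0 < u) (hv : 0 < v) :
    |v ^ b - u ^ b - b * u ^ (b - 1) * (v - u)| ≤
      |b| * |b - 1| * (min u v) ^ (b - 2) * (v - u) ^ 2 := by
  obtain ⟨c, hc0, hc1, hc2, hc⟩ := rpow_mvt b hu hv
  obtain ⟨d, hd0, hd1, hd2, hd⟩ := rpow_mvt (b - 1) hu hc0
  have he : b - 1 - 1 = b - 2 := by ring
  rw [he] at hd
  have step : v ^ b - u ^ b - b * u ^ (b - 1) * (v - u)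
      = b * (c ^ (b - 1) - u ^ (b - 1)) * (v - u) := by rw [hc]; ring
  have hexpr : v ^ b - u ^ b - b * u ^ (b - 1) * (v - u)
      = b * ((b - 1) * d ^ (b - 2) * (c - u)) * (v - u) := by rw [step, hd]
  rw [hexpr]
  have hmin : 0 < min u v := lt_min hu hv
  have hdmin : min u v ≤ d := le_trans (le_min (min_le_left u v) hc1) hd1
  have hdle : d ^ (b - 2) ≤ (min u v) ^ (b - 2) :=
    Real.rpow_le_rpow_of_nonpos hmin hdmin (by linarith)
  have hdpos : (0:ℝ) ≤ d ^ (b - 2) := (Real.rpow_pos_of_pos hd0 _).le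
  have hcu : |c - u| ≤ |v - u| := by
    rcases le_total u v with h | h
    · rw [min_eq_left h] at hc1; rw [max_eq_right h] at hc2
      rw [abs_of_nonneg (by linarith), abs_of_nonneg (by linarith)]; linarith
    · rw [min_eq_right h] at hc1; rw [max_eq_left h] at hc2
      rw [abs_of_nonpos (by linarith), abs_of_nonpos (by linarith)]; linarith
  have habs : |b * ((b - 1) * d ^ (b - 2) * (c - u)) * (v - u)|
      = |b| * (|b - 1| * (d ^ (b - 2) * |c - u|)) * |v - u| := by
    rw [abs_mul, abs_mul, abs_mul, abs_mul, abs_of_nonneg hdpos]; ring_nf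
  rw [habs]
  have h2 : (v - u) ^ 2 = |v - u| * |v - u| := by rw [← sq_abs, sq]
  rw [h2]
  have key : d ^ (b - 2) * |c - u| ≤ (min u v) ^ (b - 2) * |v - u| := by
    apply mul_le_mul hdle hcu (abs_nonneg _) ((Real.rpow_pos_of_pos hmin _).le)
  calc |b| * (|b - 1| * (d ^ (b - 2) * |c - u|)) * |v - u|
      ≤ |b| * (|b - 1| * ((min u v) ^ (b - 2) * |v - u|)) * |v - u| := by
        apply mul_le_mul_of_nonneg_right _ (abs_nonneg _)
        apply mul_le_mul_of_nonneg_left _ (abs_nonneg _)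
        exact mul_le_mul_of_nonneg_left key (abs_nonneg _)
    _ = |b| * |b - 1| * (min u v) ^ (b - 2) * (|v - u| * |v - u|) := by ring

lemma key_bound (b : ℝ) (hb : b ≤ 2) {u v1 v2 D2 S : ℝ} (hu : 0 < u)
    (hv1 : 0 < v1) (hv2 : 0 < v2) (h1 : u / 4 ≤ v1) (h2 : u / 4 ≤ v2)
    (hd1 : (v1 - u) ^ 2 ≤ D2) (hd2 : (v2 - u) ^ 2 ≤ D2)
    (hsum : |v1 + v2 - 2 * u| ≤ S) :
    |v1 ^ b + v2 ^ b - 2 * u ^ b| ≤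
      2 * (|b| * |b - 1| * (u / 4) ^ (b - 2) * D2) + |b| * u ^ (b - 1) * S := by
  have hu4 : (0:ℝ) < u / 4 := by linarith
  have hR : ∀ v : ℝ, 0 < v → u / 4 ≤ v → (v - u) ^ 2 ≤ D2 →
      |v ^ b - u ^ b - b * u ^ (b - 1) * (v - u)| ≤ |b| * |b - 1| * (u / 4) ^ (b - 2) * D2 := by
    intro v hv hv4 hvd
    refine le_trans (rpow_taylor b hb hu hv) ?_
    have hmin : u / 4 ≤ min u v := le_min (by linarith) hv4
    have hmle : (min u v) ^ (b - 2) ≤ (u / 4) ^ (b - 2) :=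
      Real.rpow_le_rpow_of_nonpos hu4 hmin (by linarith)
    have h5 : (0:ℝ) ≤ (v - u) ^ 2 := sq_nonneg _
    have := mul_le_mul hmle hvd h5 (Real.rpow_pos_of_pos hu4 _).le
    nlinarith [abs_nonneg b, abs_nonneg (b - 1), this,
      mul_nonneg (abs_nonneg b) (abs_nonneg (b - 1))]
  have e1 := hR v1 hv1 h1 hd1
  have e2 := hR v2 hv2 h2 hd2
  have elin : |b * u ^ (b - 1) * (v1 + v2 - 2 * u)| ≤ |b| * u ^ (b - 1) * S := by
    rw [abs_mul, abs_mul, abs_of_nonneg (Real.rpow_pos_of_pos hu _).le]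
    apply mul_le_mul_of_nonneg_left hsum
    positivity
  have iden : v1 ^ b + v2 ^ b - 2 * u ^ b =
      (v1 ^ b - u ^ b - b * u ^ (b - 1) * (v1 - u)) +
      (v2 ^ b - u ^ b - b * u ^ (b - 1) * (v2 - u)) +
      b * u ^ (b - 1) * (v1 + v2 - 2 * u) := by ring
  calc |v1 ^ b + v2 ^ b - 2 * u ^ b| ≤
      |v1 ^ b - u ^ b - b * u ^ (b - 1) * (v1 - u)| +
      |v2 ^ b - u ^ b - b * u ^ (b - 1) * (v2 - u)| +
      |b * u ^ (b - 1) * (v1 + v2 - 2 * u)| := by rw [iden]; exact abs_add_three _ _ _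
    _ ≤ 2 * (|b| * |b - 1| * (u / 4) ^ (b - 2) * D2) + |b| * u ^ (b - 1) * S := by linarith

lemma summable_int_aux {t : ℝ} (ht : 1 < t) :
    Summable (fun n : ℤ => ((1:ℝ) + |(n:ℝ)|) ^ (-t)) := by
  rw [summable_int_iff_summable_nat_and_neg]
  have key : Summable (fun n : ℕ => ((1:ℝ) + |((n:ℤ):ℝ)|) ^ (-t)) := by
    have h0 := (Real.summable_one_div_nat_add_rpow 1 t).2 ht
    refine h0.congr fun n => ?_
    rw [abs_of_nonneg (by positivity : (0:ℝ) ≤ (n:ℝ) + 1),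
      abs_of_nonneg (by positivity : (0:ℝ) ≤ ((n:ℤ):ℝ))]
    rw [Real.rpow_neg (by positivity), one_div]
    norm_num [add_comm]
  constructor
  · exact key
  · refine key.congr fun n => ?_
    push_cast
    rw [abs_neg]
set_option maxHeartbeats 1000000 in
lemma summable_triple {t : ℝ} (ht : 1 < t) :
    Summable (fun p : ℤ × ℤ × ℤ => ((1:ℝ) + |(p.1:ℝ)|) ^ (-t) *
      (((1:ℝ) + |(p.2.1:ℝ)|) ^ (-t) * ((1:ℝ) + |(p.2.2:ℝ)|) ^ (-t))) := by
  have h1 := summable_int_aux ht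
  have hpos : ∀ n : ℤ, (0:ℝ) ≤ ((1:ℝ) + |(n:ℝ)|) ^ (-t) := fun n => by positivity
  have h2 : Summable (fun q : ℤ × ℤ => ((1:ℝ) + |(q.1:ℝ)|) ^ (-t) *
      ((1:ℝ) + |(q.2:ℝ)|) ^ (-t)) := h1.mul_of_nonneg h1 hpos hpos
  exact h1.mul_of_nonneg h2 hpos (fun q => by positivity)

lemma lattice_bound {b t w a1 a2 a3 : ℝ} (hb : b < 1) (ht : t = 2 * (1 - b) / 3)
    (hw : 1 ≤ w) (h1 : 0 ≤ a1) (h2 : 0 ≤ a2) (h3 : 0 ≤ a3)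
    (hs1 : a1 ^ 2 ≤ w) (hs2 : a2 ^ 2 ≤ w) (hs3 : a3 ^ 2 ≤ w) :
    w ^ (b - 1) ≤ 8 ^ t * ((1 + a1) ^ (-t) * ((1 + a2) ^ (-t) * (1 + a3) ^ (-t))) := by
  have hw0 : (0:ℝ) < w := by linarith
  have ht0 : 0 < t := by rw [ht]; linarith
  have hsq : ∀ a : ℝ, 0 ≤ a → a ^ 2 ≤ w → 1 + a ≤ 2 * Real.sqrt w := by
    intro a ha haw
    have h1w : (1:ℝ) ≤ Real.sqrt w := by
      rw [show (1:ℝ) = Real.sqrt 1 from (Real.sqrt_one).symm]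
      exact Real.sqrt_le_sqrt hw
    have haw' : a ≤ Real.sqrt w := by
      have : Real.sqrt (a ^ 2) ≤ Real.sqrt w := Real.sqrt_le_sqrt haw
      rwa [Real.sqrt_sq ha] at this
    linarith
  have e1 := hsq a1 h1 hs1
  have e2 := hsq a2 h2 hs2
  have e3 := hsq a3 h3 hs3
  set P : ℝ := (1 + a1) * ((1 + a2) * (1 + a3)) with hP
  have hPpos : 0 < P := by positivity
  have hsw : (0:ℝ) ≤ Real.sqrt w := Real.sqrt_nonneg w
  have hPle : P ≤ 8 * w ^ ((3:ℝ)/2) := by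
    have hcube : (2 * Real.sqrt w) * ((2 * Real.sqrt w) * (2 * Real.sqrt w))
        = 8 * w ^ ((3:ℝ)/2) := by
      rw [Real.sqrt_eq_rpow]
      rw [show (2 * w ^ ((1:ℝ)/2)) * ((2 * w ^ ((1:ℝ)/2)) * (2 * w ^ ((1:ℝ)/2)))
        = 8 * (w ^ ((1:ℝ)/2) * w ^ ((1:ℝ)/2) * w ^ ((1:ℝ)/2)) from by ring]
      rw [← Real.rpow_add hw0, ← Real.rpow_add hw0]
      norm_num
    rw [← hcube]
    have q1 : (0:ℝ) ≤ 1 + a1 := by linarith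
    have q2 : (0:ℝ) ≤ 1 + a2 := by linarith
    have q3 : (0:ℝ) ≤ 1 + a3 := by linarith
    exact mul_le_mul e1 (mul_le_mul e2 e3 q3 (by linarith)) (by positivity) (by linarith)
  have hPt : P ^ t ≤ 8 ^ t * w ^ (1 - b) := by
    have step := Real.rpow_le_rpow hPpos.le hPle ht0.le
    have hmr : ((8:ℝ) * w ^ ((3:ℝ)/2)) ^ t = 8 ^ t * w ^ (1 - b) := by
      rw [Real.mul_rpow (by norm_num) (by positivity), ← Real.rpow_mul hw0.le,
        show (3:ℝ)/2 * t = 1 - b from by rw [ht]; ring]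
    rwa [hmr] at step
  have hkey : w ^ (b - 1) * P ^ t ≤ 8 ^ t := by
    calc w ^ (b - 1) * P ^ t ≤ w ^ (b - 1) * (8 ^ t * w ^ (1 - b)) :=
          mul_le_mul_of_nonneg_left hPt (Real.rpow_pos_of_pos hw0 _).le
      _ = 8 ^ t * (w ^ (b - 1) * w ^ (1 - b)) := by ring
      _ = 8 ^ t := by rw [← Real.rpow_add hw0]; norm_num
  have hPt0 : 0 < P ^ t := Real.rpow_pos_of_pos hPpos _
  have goal2 : w ^ (b - 1) ≤ 8 ^ t * (P ^ t)⁻¹ := by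
    rw [← div_eq_mul_inv, le_div_iff₀ hPt0]
    exact hkey
  calc w ^ (b - 1) ≤ 8 ^ t * (P ^ t)⁻¹ := goal2
    _ = 8 ^ t * ((1 + a1) ^ (-t) * ((1 + a2) ^ (-t) * (1 + a3) ^ (-t))) := by
      rw [← Real.rpow_neg hPpos.le, hP,
        Real.mul_rpow (by linarith) (by positivity),
        Real.mul_rpow (by linarith) (by linarith)]

noncomputable def uu (p : ℤ × ℤ × ℤ) : ℝ :=
  (2 * π * p.1) ^ 2 + (2 * π * p.2.1) ^ 2 + (2 * π * p.2.2) ^ 2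

noncomputable def vv (x1 x2 x3 : ℝ) (p : ℤ × ℤ × ℤ) : ℝ :=
  (x1 - 2 * π * p.1) ^ 2 + (x2 - 2 * π * p.2.1) ^ 2 + (x3 - 2 * π * p.2.2) ^ 2

noncomputable def FF (b x1 x2 x3 : ℝ) (p : ℤ × ℤ × ℤ) : ℝ :=
  vv x1 x2 x3 p ^ b - uu p ^ b

noncomputable def GG (b x1 x2 x3 : ℝ) (p : ℤ × ℤ × ℤ) : ℝ :=
  if p = 0 then 0 else FF b x1 x2 x3 p + FF b x1 x2 x3 (-p)

lemma uu_eq (p : ℤ × ℤ × ℤ) :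
    uu p = 4 * π ^ 2 * ((p.1 : ℝ) ^ 2 + (p.2.1 : ℝ) ^ 2 + (p.2.2 : ℝ) ^ 2) := by
  simp only [uu]; ring

lemma uu_neg (p : ℤ × ℤ × ℤ) : uu (-p) = uu p := by
  simp only [uu, Prod.fst_neg, Prod.snd_neg]
  push_cast
  ring

set_option maxHeartbeats 6000000 in
lemma G_le (b t : ℝ) (hb1 : b < 0) (hb2 : b ≤ 2) (ht : t = 2 * (1 - b) / 3)
    (x1 x2 x3 : ℝ) (B : ℤ) (hB1 : 1 ≤ B) (hBX : x1 ^ 2 + x2 ^ 2 + x3 ^ 2 ≤ (B : ℝ))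
    (hv : ∀ p : ℤ × ℤ × ℤ, 0 < vv x1 x2 x3 p)
    (p : ℤ × ℤ × ℤ) (hp : B ≤ |p.1| ∨ B ≤ |p.2.1| ∨ B ≤ |p.2.2|) :
    |GG b x1 x2 x3 p| ≤
      ((20 * |b| * |b - 1| * (4:ℝ) ^ (2 - b) + 2 * |b|) * (x1 ^ 2 + x2 ^ 2 + x3 ^ 2) * 8 ^ t) *
      ((1 + |(p.1 : ℝ)|) ^ (-t) * ((1 + |(p.2.1 : ℝ)|) ^ (-t) * (1 + |(p.2.2 : ℝ)|) ^ (-t))) := by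
  set Xs : ℝ := x1 ^ 2 + x2 ^ 2 + x3 ^ 2 with hXs
  have hXs0 : 0 ≤ Xs := by positivity
  set w : ℝ := (p.1 : ℝ) ^ 2 + (p.2.1 : ℝ) ^ 2 + (p.2.2 : ℝ) ^ 2 with hw
  -- coordinate bound gives w ≥ B^2
  have hB2w : ((B : ℝ)) ^ 2 ≤ w := by
    rcases hp with h | h | h
    · have : ((B : ℝ)) ≤ |(p.1 : ℝ)| := by rw [← Int.cast_abs]; exact_mod_cast h
      nlinarith [sq_abs ((p.1 : ℝ)), sq_nonneg ((p.2.1 : ℝ)), sq_nonneg ((p.2.2 : ℝ)), abs_nonneg ((p.1:ℝ))]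
    · have : ((B : ℝ)) ≤ |(p.2.1 : ℝ)| := by rw [← Int.cast_abs]; exact_mod_cast h
      nlinarith [sq_abs ((p.2.1 : ℝ)), sq_nonneg ((p.1 : ℝ)), sq_nonneg ((p.2.2 : ℝ)), abs_nonneg ((p.2.1:ℝ))]
    · have : ((B : ℝ)) ≤ |(p.2.2 : ℝ)| := by rw [← Int.cast_abs]; exact_mod_cast h
      nlinarith [sq_abs ((p.2.2 : ℝ)), sq_nonneg ((p.1 : ℝ)), sq_nonneg ((p.2.1 : ℝ)), abs_nonneg ((p.2.2:ℝ))]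
  have hB1R : (1:ℝ) ≤ (B : ℝ) := by exact_mod_cast hB1
  have hw1 : 1 ≤ w := by nlinarith
  have hXw : Xs ≤ w := by nlinarith
  have hp0 : p ≠ 0 := by
    intro h
    rcases hp with hh | hh | hh <;> rw [h] at hh <;> simp at hh <;> omega
  have hπ : (3:ℝ) < π := Real.pi_gt_three
  have hπ2 : (36:ℝ) ≤ 4 * π ^ 2 := by nlinarith
  have hu_pos : 0 < uu p := by rw [uu_eq, ← hw]; nlinarith
  have huw : w ≤ uu p := by rw [uu_eq, ← hw]; nlinarith
  have hu36 : 36 * Xs ≤ uu p := by rw [uu_eq, ← hw]; nlinarith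
  set I : ℝ := x1 * (2 * π * p.1) + x2 * (2 * π * p.2.1) + x3 * (2 * π * p.2.2) with hI
  have hCS : I ^ 2 ≤ Xs * uu p := by
    simp only [hI, hXs, uu]
    nlinarith [sq_nonneg (x1 * (2 * π * p.2.1) - x2 * (2 * π * p.1)),
      sq_nonneg (x1 * (2 * π * p.2.2) - x3 * (2 * π * p.1)),
      sq_nonneg (x2 * (2 * π * p.2.2) - x3 * (2 * π * p.2.1))]
  have hvm_eq : vv x1 x2 x3 p = uu p - 2 * I + Xs := by
    simp only [vv, uu, hI, hXs]; ring
  have hvp_eq : vv x1 x2 x3 (-p) = uu p + 2 * I + Xs := by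
    simp only [vv, uu, hI, hXs, Prod.fst_neg, Prod.snd_neg]
    push_cast; ring
  have hXu : 36 * (Xs * uu p) ≤ uu p * uu p := by
    nlinarith [mul_le_mul_of_nonneg_right hu36 hu_pos.le]
  have h1 : uu p / 4 ≤ vv x1 x2 x3 p := by
    rw [hvm_eq]
    nlinarith [sq_nonneg (uu p / 6 - I), hCS, hXu, hXs0, hu_pos]
  have h2 : uu p / 4 ≤ vv x1 x2 x3 (-p) := by
    rw [hvp_eq]
    nlinarith [sq_nonneg (uu p / 6 + I), hCS, hXu, hXs0, hu_pos]
  have hXsu : Xs * Xs ≤ Xs * uu p :=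
    mul_le_mul_of_nonneg_left (le_trans hXw huw) hXs0
  have hd1 : (vv x1 x2 x3 p - uu p) ^ 2 ≤ 10 * Xs * uu p := by
    rw [hvm_eq]
    nlinarith [sq_nonneg (Xs + 2 * I), hCS, hXsu]
  have hd2 : (vv x1 x2 x3 (-p) - uu p) ^ 2 ≤ 10 * Xs * uu p := by
    rw [hvp_eq]
    nlinarith [sq_nonneg (Xs - 2 * I), hCS, hXsu]
  have hsum : |vv x1 x2 x3 p + vv x1 x2 x3 (-p) - 2 * uu p| ≤ 2 * Xs := by
    rw [hvm_eq, hvp_eq, show uu p - 2 * I + Xs + (uu p + 2 * I + Xs) - 2 * uu p = 2 * Xs from by ring,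
      abs_of_nonneg (by linarith)]
  have kb := key_bound b hb2 hu_pos (hv p) (hv (-p)) h1 h2 hd1 hd2 hsum
  have hGeq : GG b x1 x2 x3 p = vv x1 x2 x3 p ^ b + vv x1 x2 x3 (-p) ^ b - 2 * uu p ^ b := by
    simp only [GG, FF, if_neg hp0, uu_neg]; ring
  set C0 : ℝ := (20 * |b| * |b - 1| * (4:ℝ) ^ (2 - b) + 2 * |b|) * Xs with hC0
  have hC0nn : 0 ≤ C0 := by
    apply mul_nonneg _ hXs0
    have : (0:ℝ) ≤ (4:ℝ) ^ (2 - b) := (Real.rpow_pos_of_pos (by norm_num) _).le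
    positivity
  have hsplit : uu p ^ (b - 2) * uu p = uu p ^ (b - 1) := by
    calc uu p ^ (b - 2) * uu p = uu p ^ (b - 2) * uu p ^ (1:ℝ) := by rw [Real.rpow_one]
      _ = uu p ^ (b - 2 + 1) := (Real.rpow_add hu_pos _ _).symm
      _ = uu p ^ (b - 1) := by congr 1; ring
  have h4 : ((4:ℝ) ^ (b - 2))⁻¹ = (4:ℝ) ^ (2 - b) := by
    rw [← Real.rpow_neg (by norm_num : (0:ℝ) ≤ 4)]
    norm_num
  have hrhs : 2 * (|b| * |b - 1| * (uu p / 4) ^ (b - 2) * (10 * Xs * uu p))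
      + |b| * uu p ^ (b - 1) * (2 * Xs) = C0 * uu p ^ (b - 1) := by
    rw [Real.div_rpow hu_pos.le (by norm_num : (0:ℝ) ≤ 4), div_eq_mul_inv, h4]
    rw [show 2 * (|b| * |b - 1| * (uu p ^ (b - 2) * (4:ℝ) ^ (2 - b)) * (10 * Xs * uu p))
      = 20 * |b| * |b - 1| * (4:ℝ) ^ (2 - b) * Xs * (uu p ^ (b - 2) * uu p) from by ring, hsplit,
      hC0]
    ring
  rw [hGeq]
  rw [hrhs] at kb
  have hw0 : (0:ℝ) < w := by linarith
  have hmon : uu p ^ (b - 1) ≤ w ^ (b - 1) :=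
    Real.rpow_le_rpow_of_nonpos hw0 huw (by linarith)
  have hlat := lattice_bound (show b < 1 from by linarith) ht hw1
    (abs_nonneg ((p.1:ℝ))) (abs_nonneg ((p.2.1:ℝ))) (abs_nonneg ((p.2.2:ℝ)))
    (by rw [sq_abs]; nlinarith [sq_nonneg ((p.2.1:ℝ)), sq_nonneg ((p.2.2:ℝ))])
    (by rw [sq_abs]; nlinarith [sq_nonneg ((p.1:ℝ)), sq_nonneg ((p.2.2:ℝ))])
    (by rw [sq_abs]; nlinarith [sq_nonneg ((p.1:ℝ)), sq_nonneg ((p.2.1:ℝ))])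
  calc |vv x1 x2 x3 p ^ b + vv x1 x2 x3 (-p) ^ b - 2 * uu p ^ b|
      ≤ C0 * uu p ^ (b - 1) := kb
    _ ≤ C0 * w ^ (b - 1) := mul_le_mul_of_nonneg_left hmon hC0nn
    _ ≤ C0 * ((8:ℝ) ^ t * ((1 + |(p.1 : ℝ)|) ^ (-t) *
        ((1 + |(p.2.1 : ℝ)|) ^ (-t) * (1 + |(p.2.2 : ℝ)|) ^ (-t)))) :=
        mul_le_mul_of_nonneg_left hlat hC0nn
    _ = ((20 * |b| * |b - 1| * (4:ℝ) ^ (2 - b) + 2 * |b|) * Xs * 8 ^ t) *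
        ((1 + |(p.1 : ℝ)|) ^ (-t) * ((1 + |(p.2.1 : ℝ)|) ^ (-t) * (1 + |(p.2.2 : ℝ)|) ^ (-t))) := by
        rw [hC0]; ring

lemma sqrt_rpow (q a : ℝ) (hq : 0 ≤ q) : Real.sqrt q ^ a = q ^ (a / 2) := by
  rw [Real.sqrt_eq_rpow, ← Real.rpow_mul hq]
  congr 1; ring

/-- For `0 < s < 1` and `x ∈ ℝ³ \ 2πℤ³`, the regularized periodization of the power kernel
`|y|^{2s-3}` converges by expanding rectangles: there is `L ∈ ℝ` such that for every `ε > 0`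
there is `N₀` with
`|L - ∑_{(n,k,l) ∈ Π_{N,M,K} ∩ ℤ³, (n,k,l) ≠ 0} (|x - 2π(n,k,l)|^{2s-3} - |2π(n,k,l)|^{2s-3})| < ε`
whenever `N, M, K ≥ N₀`, where `Π_{N,M,K} = [-N,N] × [-M,M] × [-K,K]`. -/
theorem regularized_periodization_converges (s : ℝ) (hs0 : 0 < s) (hs1 : s < 1)
    (x : ℝ × ℝ × ℝ)
    (hx : ∀ p : ℤ × ℤ × ℤ, x ≠ (2 * π * p.1, 2 * π * p.2.1, 2 * π * p.2.2)) :
    ∃ L : ℝ, ∀ ε > (0 : ℝ), ∃ N₀ : ℕ, ∀ N M K : ℕ, N₀ ≤ N → N₀ ≤ M → N₀ ≤ K →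
      |L - ∑ p ∈ ((Finset.Icc (-(N : ℤ)) (N : ℤ)) ×ˢ (Finset.Icc (-(M : ℤ)) (M : ℤ)) ×ˢ
          (Finset.Icc (-(K : ℤ)) (K : ℤ))).filter (fun p : ℤ × ℤ × ℤ => p ≠ 0),
          (Real.sqrt ((x.1 - 2 * π * p.1) ^ 2 + (x.2.1 - 2 * π * p.2.1) ^ 2 +
              (x.2.2 - 2 * π * p.2.2) ^ 2) ^ (2 * s - 3) -
            Real.sqrt ((2 * π * p.1) ^ 2 + (2 * π * p.2.1) ^ 2 +
              (2 * π * p.2.2) ^ 2) ^ (2 * s - 3))| < ε := by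
  obtain ⟨x1, x2, x3⟩ := x
  set b : ℝ := s - 3/2 with hbdef
  have hb0 : b < 0 := by rw [hbdef]; linarith
  have hb2 : b ≤ 2 := by rw [hbdef]; linarith
  set t : ℝ := 2 * (1 - b) / 3 with htdef
  have ht1 : 1 < t := by rw [htdef, hbdef]; linarith
  -- positivity of vv
  have hv : ∀ p : ℤ × ℤ × ℤ, 0 < vv x1 x2 x3 p := by
    intro p
    have h0 : 0 ≤ vv x1 x2 x3 p := by simp only [vv]; positivity
    rcases h0.lt_or_eq with h | h
    · exact h
    · exfalso
      have h' := h.symm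
      simp only [vv] at h'
      have e1 : x1 - 2 * π * p.1 = 0 := by
        nlinarith [sq_nonneg (x1 - 2 * π * (p.1:ℝ)), sq_nonneg (x2 - 2 * π * (p.2.1:ℝ)),
          sq_nonneg (x3 - 2 * π * (p.2.2:ℝ))]
      have e2 : x2 - 2 * π * p.2.1 = 0 := by
        nlinarith [sq_nonneg (x1 - 2 * π * (p.1:ℝ)), sq_nonneg (x2 - 2 * π * (p.2.1:ℝ)),
          sq_nonneg (x3 - 2 * π * (p.2.2:ℝ))]
      have e3 : x3 - 2 * π * p.2.2 = 0 := by
        nlinarith [sq_nonneg (x1 - 2 * π * (p.1:ℝ)), sq_nonneg (x2 - 2 * π * (p.2.1:ℝ)),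
          sq_nonneg (x3 - 2 * π * (p.2.2:ℝ))]
      exact hx p (by rw [Prod.mk.injEq, Prod.mk.injEq]
                     exact ⟨by linarith, by linarith, by linarith⟩)
  set Xs : ℝ := x1 ^ 2 + x2 ^ 2 + x3 ^ 2 with hXs
  set Cg : ℝ := (20 * |b| * |b - 1| * (4:ℝ) ^ (2 - b) + 2 * |b|) * Xs * 8 ^ t with hCg
  set g : ℤ × ℤ × ℤ → ℝ := fun p => Cg *
    ((1 + |(p.1 : ℝ)|) ^ (-t) * ((1 + |(p.2.1 : ℝ)|) ^ (-t) * (1 + |(p.2.2 : ℝ)|) ^ (-t)))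
    with hgdef
  have hgsum : Summable g := (summable_triple ht1).mul_left Cg
  obtain ⟨B, hB1, hBX⟩ : ∃ B : ℤ, (1:ℤ) ≤ B ∧ Xs ≤ (B : ℝ) :=
    ⟨max 1 ⌈Xs⌉, le_max_left _ _,
      le_trans (Int.le_ceil Xs) (by exact_mod_cast le_max_right 1 ⌈Xs⌉)⟩
  have hev : ∀ᶠ p in Filter.cofinite, ‖GG b x1 x2 x3 p‖ ≤ g p := by
    rw [Filter.eventually_cofinite]
    apply Set.Finite.subset
      ((Finset.Icc (-B) B ×ˢ Finset.Icc (-B) B ×ˢ Finset.Icc (-B) B).finite_toSet)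
    intro p hp
    simp only [Set.mem_setOf_eq] at hp
    by_contra hmem
    apply hp
    have hor : B ≤ |p.1| ∨ B ≤ |p.2.1| ∨ B ≤ |p.2.2| := by
      simp only [Finset.coe_product, Set.mem_prod, Finset.mem_coe, Finset.mem_Icc] at hmem
      simp only [Int.abs_eq_natAbs]
      omega
    rw [Real.norm_eq_abs]
    exact G_le b t hb0 hb2 htdef x1 x2 x3 B hB1 hBX hv p hor
  have hGsum : Summable (GG b x1 x2 x3) :=
    Summable.of_norm_bounded_eventually hgsum hev
  refine ⟨(∑' p, GG b x1 x2 x3 p) / 2, ?_⟩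
  intro ε hε
  have htend : Filter.Tendsto (fun F : Finset (ℤ × ℤ × ℤ) => ∑ p ∈ F, GG b x1 x2 x3 p)
      Filter.atTop (nhds (∑' p, GG b x1 x2 x3 p)) := hGsum.hasSum
  obtain ⟨T, hT⟩ := Metric.tendsto_atTop.mp htend ε hε
  refine ⟨T.sup (fun q => q.1.natAbs ⊔ (q.2.1.natAbs ⊔ q.2.2.natAbs)), ?_⟩
  intro N M K hN hM hK
  set S : Finset (ℤ × ℤ × ℤ) := ((Finset.Icc (-(N : ℤ)) (N : ℤ)) ×ˢ
    (Finset.Icc (-(M : ℤ)) (M : ℤ)) ×ˢ (Finset.Icc (-(K : ℤ)) (K : ℤ))).filter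
    (fun p : ℤ × ℤ × ℤ => p ≠ 0) with hSdef
  have hmemS : ∀ p : ℤ × ℤ × ℤ, p ∈ S ↔
      ((-(N:ℤ) ≤ p.1 ∧ p.1 ≤ N) ∧ (-(M:ℤ) ≤ p.2.1 ∧ p.2.1 ≤ M) ∧
       (-(K:ℤ) ≤ p.2.2 ∧ p.2.2 ≤ K)) ∧ p ≠ 0 := by
    intro p
    simp [hSdef, Finset.mem_filter, Finset.mem_product, Finset.mem_Icc, and_assoc]
  have hTsub : T ⊆ insert (0 : ℤ × ℤ × ℤ) S := by
    intro q hq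
    rcases eq_or_ne q 0 with h | h
    · simp [h]
    · apply Finset.mem_insert_of_mem
      have hle := Finset.le_sup (f := fun q : ℤ × ℤ × ℤ =>
        q.1.natAbs ⊔ (q.2.1.natAbs ⊔ q.2.2.natAbs)) hq
      have h1 : q.1.natAbs ≤ N := le_trans (le_trans le_sup_left hle) hN
      have h2 : q.2.1.natAbs ≤ M := le_trans (le_trans (le_sup_of_le_right le_sup_left) hle) hM
      have h3 : q.2.2.natAbs ≤ K := le_trans (le_trans (le_sup_of_le_right le_sup_right) hle) hK
      rw [hmemS]
      refine ⟨⟨?_, ?_, ?_⟩, h⟩ <;> omega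
  have h0S : (0 : ℤ × ℤ × ℤ) ∉ S := by
    rw [hmemS]; simp
  have hd := hT (insert 0 S) hTsub
  rw [Finset.sum_insert h0S] at hd
  have hG0 : GG b x1 x2 x3 0 = 0 := by simp [GG]
  rw [hG0, zero_add, Real.dist_eq] at hd
  -- identify the sum
  have hstep1 : ∀ p ∈ S,
      (Real.sqrt ((x1 - 2 * π * p.1) ^ 2 + (x2 - 2 * π * p.2.1) ^ 2 +
          (x3 - 2 * π * p.2.2) ^ 2) ^ (2 * s - 3) -
        Real.sqrt ((2 * π * p.1) ^ 2 + (2 * π * p.2.1) ^ 2 +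
          (2 * π * p.2.2) ^ 2) ^ (2 * s - 3)) = FF b x1 x2 x3 p := by
    intro p _
    rw [sqrt_rpow _ _ (by positivity), sqrt_rpow _ _ (by positivity)]
    rw [FF, show (2 * s - 3) / 2 = b from by rw [hbdef]; ring]
    rfl
  rw [Finset.sum_congr rfl hstep1]
  -- symmetrization
  have hneg : ∀ p ∈ S, -p ∈ S := by
    intro p hp
    rw [hmemS] at hp ⊢
    obtain ⟨⟨⟨a1, a2⟩, ⟨b1, b2⟩, ⟨c1, c2⟩⟩, hne⟩ := hp
    exact ⟨⟨⟨by simp; omega, by simp; omega⟩, ⟨by simp; omega, by simp; omega⟩,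
      ⟨by simp; omega, by simp; omega⟩⟩, by simpa using hne⟩
  have hnegsum : ∑ p ∈ S, FF b x1 x2 x3 (-p) = ∑ p ∈ S, FF b x1 x2 x3 p := by
    exact Finset.sum_bij' (fun p _ => -p) (fun p _ => -p) hneg hneg
      (fun a _ => by simp) (fun a _ => by simp) (fun a _ => rfl)
  have hsum2 : ∑ p ∈ S, GG b x1 x2 x3 p = 2 * ∑ p ∈ S, FF b x1 x2 x3 p := by
    have : ∀ p ∈ S, GG b x1 x2 x3 p = FF b x1 x2 x3 p + FF b x1 x2 x3 (-p) := by
      intro p hp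
      rw [GG, if_neg ((hmemS p).mp hp).2]
    rw [Finset.sum_congr rfl this, Finset.sum_add_distrib, hnegsum]
    ring
  have : ∑ p ∈ S, FF b x1 x2 x3 p = (∑ p ∈ S, GG b x1 x2 x3 p) / 2 := by
    rw [hsum2]; ring
  rw [this]
  have e : (∑' p, GG b x1 x2 x3 p) / 2 - (∑ p ∈ S, GG b x1 x2 x3 p) / 2
      = (∑' p, GG b x1 x2 x3 p - ∑ p ∈ S, GG b x1 x2 x3 p) / 2 := by ring
  rw [e, abs_div, abs_two]
  rw [abs_sub_comm] at hd
  linarith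
end
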